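/- arXiv:1601.07307 — 6 statements merged into one kernel-verified Lean document; each statement's English description precedes it below -/
import Mathlib

section
/- If M is a countably infinite graph that is ≥k-homogeneous for some k (i.e., every isomorphism between finite induced subgraphs of size at least k extends to an automorphism of M) and M is not 1-homogeneous, and the countable complete graph K_∞ embeds into M, then M has exactly two orbits of vertices under Aut(M), and one of them is finite. -/
open SimpleGraph

/-- `M` is `n`-homogeneous: every isomorphism between induced subgraphs on
finite vertex sets of size `n` extends to an automorphism of `M`. -/
def IsNHom {V : Type*} (M : SimpleGraph V) (n : ℕ) : Prop :=
  ∀ (s t : Set V), s.Finite → t.Finite → s.ncard = n → t.ncard = n →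
    ∀ f : M.induce s ≃g M.induce t, ∃ g : M ≃g M, ∀ x : s, g x.val = (f x).val

/-- `M` is `≥k`-homogeneous: `n`-homogeneous for all `n ≥ k`. -/
def GeqHom {V : Type*} (M : SimpleGraph V) (k : ℕ) : Prop :=
  ∀ n, k ≤ n → IsNHom M n

/-- `M` is homogeneous: `n`-homogeneous for all `n`. -/
def IsHomogeneous {V : Type*} (M : SimpleGraph V) : Prop :=
  ∀ n, IsNHom M n

/-- The countably infinite complete graph embeds into `M` as an induced subgraph. -/
def HasKInf {V : Type*} (M : SimpleGraph V) : Prop :=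
  Nonempty ((⊤ : SimpleGraph ℕ) ↪g M)

/-- `a` and `b` lie in the same orbit of vertices under `Aut(M)`. -/
def SameOrbit {V : Type*} (M : SimpleGraph V) (a b : V) : Prop :=
  ∃ g : M ≃g M, g a = b

/-- `s` is an orbit of vertices under `Aut(M)`. -/
def IsOrbit {V : Type*} (M : SimpleGraph V) (s : Set V) : Prop :=
  ∃ a, s = {b | SameOrbit M a b}

/-- The ordered pairs `(a,b)` and `(c,d)` lie in the same orbit under `Aut(M)`. -/
def SamePairOrbit {V : Type*} (M : SimpleGraph V) (a b c d : V) : Prop :=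
  ∃ g : M ≃g M, g a = c ∧ g b = d

/-- `a` and `b` lie in a common induced copy of `K_∞`. -/
def InCommonKInf {V : Type*} (M : SimpleGraph V) (a b : V) : Prop :=
  ∃ f : (⊤ : SimpleGraph ℕ) ↪g M, a ∈ Set.range f ∧ b ∈ Set.range f

/-- The 2-orbit `q₁`: adjacent pairs lying in a common induced `K_∞`. -/
def Q1Rel {V : Type*} (M : SimpleGraph V) (a b : V) : Prop :=
  M.Adj a b ∧ InCommonKInf M a b

/-- The 2-orbit `q₂`: adjacent pairs not lying in a common induced `K_∞`. -/
def Q2Rel {V : Type*} (M : SimpleGraph V) (a b : V) : Prop :=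
  M.Adj a b ∧ ¬ InCommonKInf M a b

/-- The 2-orbit `p₁`: non-adjacent pairs `(a,b)` such that `b` is adjacent to at
most `k-1` vertices of any induced `K_∞` containing `a`. -/
def P1Rel {V : Type*} (M : SimpleGraph V) (k : ℕ) (a b : V) : Prop :=
  a ≠ b ∧ ¬ M.Adj a b ∧
    ∀ f : (⊤ : SimpleGraph ℕ) ↪g M, a ∈ Set.range f →
      {c | c ∈ Set.range f ∧ M.Adj b c}.Finite ∧
      {c | c ∈ Set.range f ∧ M.Adj b c}.ncard ≤ k - 1

/-- The 2-orbit `p₂`: the remaining non-adjacent pairs of distinct vertices. -/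
def P2Rel {V : Type*} (M : SimpleGraph V) (k : ℕ) (a b : V) : Prop :=
  a ≠ b ∧ ¬ M.Adj a b ∧ ¬ P1Rel M k a b

/-- The graph `G_t` on `ℤ × {1,…,t}`, with `(a,i)` adjacent to `(b,j)` iff `a ≠ b`. -/
def Gt (t : ℕ) : SimpleGraph (ℤ × Fin t) where
  Adj x y := x.1 ≠ y.1
  symm := ⟨fun _ _ h => Ne.symm h⟩
  loopless := ⟨fun _ h => h rfl⟩

/-- The graph `H_{t,2}`: two copies of `G_t`, with `(a,i)` in the first copy
adjacent to `(b,j)` in the second copy iff `a = b`. -/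
def Ht2 (t : ℕ) : SimpleGraph ((ℤ × Fin t) ⊕ (ℤ × Fin t)) where
  Adj x y := match x, y with
    | .inl a, .inl b => a.1 ≠ b.1
    | .inr a, .inr b => a.1 ≠ b.1
    | .inl a, .inr b => a.1 = b.1
    | .inr a, .inl b => a.1 = b.1
  symm := by
    refine ⟨?_⟩
    rintro (a | a) (b | b) h <;> simp_all <;> omega
  loopless := by
    refine ⟨?_⟩
    rintro (a | a) h <;> exact h rfl

/-- The graph `H_{1,2}`: two disjoint copies of `K_∞` joined by a perfect matching. -/
def H12 : SimpleGraph (ℤ × Fin 2) where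
  Adj x y := (x.2 = y.2 ∧ x.1 ≠ y.1) ∨ (x.1 = y.1 ∧ x.2 ≠ y.2)
  symm := by
    refine ⟨?_⟩
    rintro x y (⟨h1, h2⟩ | ⟨h1, h2⟩)
    · exact Or.inl ⟨h1.symm, h2.symm⟩
    · exact Or.inr ⟨h1.symm, h2.symm⟩
  loopless := by
    refine ⟨?_⟩
    rintro x (⟨_, h⟩ | ⟨_, h⟩) <;> exact h rfl

section Aux
variable {V : Type*} {M : SimpleGraph V} {n : ℕ}

/-- membership in some n-clique -/
def MyInCl (M : SimpleGraph V) (n : ℕ) (v : V) : Prop :=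
  ∃ s : Finset V, M.IsNClique n s ∧ v ∈ s

lemma myExtend (hn : IsNHom M n) {s t : Set V} (hs : s.Finite) (ht : t.Finite)
    (hcs : s.ncard = n) (hct : t.ncard = n) (e : s ≃ t)
    (he : ∀ x y : s, M.Adj x.val y.val ↔ M.Adj (e x).val (e y).val)
    {a b : V} (ha : a ∈ s) (hb : b ∈ t) (hab : e ⟨a, ha⟩ = ⟨b, hb⟩) :
    SameOrbit M a b := by
  obtain ⟨g, hg⟩ := hn s t hs ht hcs hct
    ⟨e, by intro x y; simp only [comap_adj, Function.Embedding.coe_subtype]; exact (he x y).symm⟩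
  refine ⟨g, ?_⟩
  have h2 := hg ⟨a, ha⟩
  rw [h2]
  exact congrArg Subtype.val hab

lemma myEquivExists {s t : Set V} (hs : s.Finite) (ht : t.Finite)
    (hcs : s.ncard = n) (hct : t.ncard = n) {a b : V} (ha : a ∈ s) (hb : b ∈ t) :
    ∃ e : s ≃ t, e ⟨a, ha⟩ = ⟨b, hb⟩ := by
  have := hs.to_subtype
  have := ht.to_subtype
  have hcard : Nat.card s = Nat.card t := by
    rw [Nat.card_coe_set_eq, Nat.card_coe_set_eq, hcs, hct]
  classical
  obtain ⟨e0⟩ := Finite.card_eq.mp hcard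
  refine ⟨e0.trans (Equiv.swap (e0 ⟨a, ha⟩) ⟨b, hb⟩), ?_⟩
  simp [Equiv.swap_apply_left]

end Aux

section Aux2
variable {V : Type*} {M : SimpleGraph V} {n : ℕ}

lemma myInCl_iso (g : M ≃g M) {v : V} (h : MyInCl M n v) : MyInCl M n (g v) := by
  classical
  obtain ⟨s, ⟨hcl, hcard⟩, hv⟩ := h
  refine ⟨s.image g, ⟨?_, ?_⟩, Finset.mem_image_of_mem g hv⟩
  · rintro x hx y hy hxy
    simp only [Finset.coe_image, Set.mem_image, Finset.mem_coe] at hx hy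
    obtain ⟨x', hx', rfl⟩ := hx
    obtain ⟨y', hy', rfl⟩ := hy
    have hne : x' ≠ y' := fun h => hxy (by rw [h])
    exact g.map_rel_iff.mpr (hcl hx' hy' hne)
  · rw [Finset.card_image_of_injective _ g.injective, hcard]

lemma myNbrsFinite {W : Set V} (hWadj : W.Pairwise M.Adj) (hn : 1 ≤ n) {v : V}
    (hv : ¬ MyInCl M n v) : {w ∈ W | M.Adj v w}.Finite := by
  classical
  by_contra hinf
  rw [Set.not_infinite.symm, not_not] at hinf
  obtain ⟨C, hC, hCcard⟩ := hinf.exists_subset_card_eq (n - 1)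
  apply hv
  refine ⟨insert v C, ?_, Finset.mem_insert_self _ _⟩
  have hclC : M.IsNClique (n-1) C := by
    refine ⟨?_, hCcard⟩
    intro x hx y hy hxy
    exact hWadj (hC hx).1 (hC hy).1 hxy
  have hins := hclC.insert (fun b hb => (hC hb).2)
  have : n - 1 + 1 = n := by omega
  rwa [this] at hins

lemma myRamsey (M : SimpleGraph V) : ∀ n m : ℕ, ∀ S : Set V, S.Infinite →
    (∀ s : Finset V, ↑s ⊆ S → ¬ M.IsNClique n s) →
    ∃ I : Finset V, ↑I ⊆ S ∧ I.card = m ∧ (I : Set V).Pairwise (fun x y => ¬ M.Adj x y) := by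
  classical
  intro n
  induction n with
  | zero =>
    intro m S hS hno
    exact absurd (show M.IsNClique 0 (∅ : Finset V) from ⟨by simp [SimpleGraph.IsClique], by simp⟩)
      (hno ∅ (by simp))
  | succ n ihn =>
    intro m
    induction m with
    | zero =>
      intro S hS hno
      exact ⟨∅, by simp⟩
    | succ m ihm =>
      intro S hS hno
      obtain ⟨v, hv⟩ := hS.nonempty
      set A : Set V := {w ∈ S | M.Adj v w} with hA
      set B : Set V := S \ insert v A with hB
      have hAB : A.Infinite ∨ B.Infinite := by
        by_contra hc
        push_neg at hc
        apply hS
        have : S ⊆ insert v (A ∪ B) := by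
          intro w hw
          by_cases hwv : w = v
          · exact Or.inl hwv
          · by_cases hadj : M.Adj v w
            · exact Or.inr (Or.inl ⟨hw, hadj⟩)
            · exact Or.inr (Or.inr ⟨hw, by simp [hwv, hA, hadj]⟩)
        exact (((hc.1.union hc.2).insert v).subset this)
      rcases hAB with hA' | hB'
      · have hnoA : ∀ s : Finset V, ↑s ⊆ A → ¬ M.IsNClique n s := by
          intro s hs hcl
          have hvs : v ∉ s := fun hmem => M.loopless.irrefl v (hs hmem).2
          apply hno (insert v s) ?_
          · exact hcl.insert (fun b hb => (hs hb).2)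
          · intro w hw
            rcases Finset.mem_insert.mp (by exact_mod_cast hw) with rfl | hws
            · exact hv
            · exact (hs hws).1
        obtain ⟨I, hI1, hI2, hI3⟩ := ihn (m + 1) A hA' hnoA
        exact ⟨I, fun x hx => (hI1 hx).1, hI2, hI3⟩
      · have hnoB : ∀ s : Finset V, ↑s ⊆ B → ¬ M.IsNClique (n+1) s :=
          fun s hs => hno s (fun x hx => (hs hx).1)
        obtain ⟨I, hI1, hI2, hI3⟩ := ihm B hB' hnoB
        have hvI : v ∉ I := fun hmem => ((hI1 hmem).2 (Set.mem_insert v A)).elim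
        refine ⟨insert v I, ?_, ?_, ?_⟩
        · intro w hw
          rcases Finset.mem_insert.mp (by exact_mod_cast hw) with rfl | hws
          · exact hv
          · exact (hI1 hws).1
        · rw [Finset.card_insert_of_notMem hvI, hI2]
        · rw [Finset.coe_insert]
          refine (letI : Std.Symm (fun x y : V => ¬ M.Adj x y) := ⟨
            (fun x y (h : ¬ M.Adj x y) (hadj : M.Adj y x) => h hadj.symm)⟩; Set.pairwise_insert_of_symm).mpr ⟨hI3, ?_⟩
          intro w hw _
          intro hadj
          exact (hI1 hw).2 (Set.mem_insert_iff.mpr (Or.inr ⟨(hI1 hw).1, hadj⟩))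

end Aux2

section Aux3
variable {V : Type*} {M : SimpleGraph V}

lemma myCharClique {s t : Set V} (e : s ≃ t)
    (hs : ∀ x y : s, M.Adj x.val y.val ↔ x.val ≠ y.val)
    (ht : ∀ x y : t, M.Adj x.val y.val ↔ x.val ≠ y.val) :
    ∀ x y : s, M.Adj x.val y.val ↔ M.Adj (e x).val (e y).val := by
  intro x y
  rw [hs, ht, Ne, Ne, ← Subtype.ext_iff, ← Subtype.ext_iff, Equiv.apply_eq_iff_eq]

lemma myCharEmpty {s t : Set V} (e : s ≃ t)
    (hs : ∀ x y : s, ¬ M.Adj x.val y.val)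
    (ht : ∀ x y : t, ¬ M.Adj x.val y.val) :
    ∀ x y : s, M.Adj x.val y.val ↔ M.Adj (e x).val (e y).val := fun x y =>
  iff_of_false (hs x y) (ht (e x) (e y))

lemma myCharApex {s t : Set V} (e : s ≃ t) {a b : V} (ha : a ∈ s) (hb : b ∈ t)
    (hab : e ⟨a, ha⟩ = ⟨b, hb⟩)
    (hs : ∀ x y : s, M.Adj x.val y.val ↔ (x.val ≠ y.val ∧ x.val ≠ a ∧ y.val ≠ a))
    (ht : ∀ x y : t, M.Adj x.val y.val ↔ (x.val ≠ y.val ∧ x.val ≠ b ∧ y.val ≠ b)) :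
    ∀ x y : s, M.Adj x.val y.val ↔ M.Adj (e x).val (e y).val := by
  intro x y
  rw [hs, ht]
  have key : ∀ z : s, (e z).val = b ↔ z.val = a := by
    intro z
    rw [show (b : V) = (⟨b, hb⟩ : t).val from rfl, ← Subtype.ext_iff, ← hab,
      Equiv.apply_eq_iff_eq, Subtype.ext_iff]
  rw [Ne, Ne, Ne, Ne, Ne, Ne, ← Subtype.ext_iff, ← Subtype.ext_iff, Equiv.apply_eq_iff_eq,
    Subtype.ext_iff, key x, key y]

end Aux3

theorem stmt0 {V : Type} [Countable V] [Infinite V] (M : SimpleGraph V) (k : ℕ)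
    (hM : GeqHom M k) (h1 : ¬ IsNHom M 1) (hK : HasKInf M) :
    ∃ p q : Set V, IsOrbit M p ∧ IsOrbit M q ∧ p ≠ q ∧ p ∪ q = Set.univ ∧
      (p.Finite ∨ q.Finite) := by
  classical
  set n := max k 2 with hn_def
  have hn1 : 1 ≤ n := le_trans (by norm_num) (le_max_right k 2)
  have hhom : IsNHom M n := hM n (le_max_left k 2)
  obtain ⟨fK⟩ := hK
  set W : Set V := Set.range fK with hW_def
  have hWinf : W.Infinite := Set.infinite_range_of_injective fK.injective
  have hWadj : W.Pairwise M.Adj := by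
    rintro _ ⟨i, rfl⟩ _ ⟨j, rfl⟩ hne
    have hij : i ≠ j := fun h => hne (by rw [h])
    exact fK.map_rel_iff.mpr (by simpa using hij)
  set P : Set V := {v | MyInCl M n v} with hP_def
  -- every vertex of W is in P
  have hWP : ∀ w ∈ W, w ∈ P := by
    intro w hw
    obtain ⟨C, hC, hCcard⟩ := (hWinf.diff (Set.finite_singleton w)).exists_subset_card_eq (n - 1)
    refine ⟨insert w C, ?_, Finset.mem_insert_self _ _⟩
    have hclC : M.IsNClique (n - 1) C := by
      refine ⟨?_, hCcard⟩
      intro x hx y hy hxy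
      exact hWadj (hC hx).1 (hC hy).1 hxy
    have hins := hclC.insert (a := w) (fun b hb => hWadj hw (hC hb).1
      (fun h => (hC hb).2 (by simp [h])))
    have heq : n - 1 + 1 = n := by omega
    rwa [heq] at hins
  -- P is a single orbit
  have hPorb : ∀ a ∈ P, ∀ b ∈ P, SameOrbit M a b := by
    rintro a ⟨s, hs, has⟩ b ⟨t, ht, hbt⟩
    have has' : a ∈ (↑s : Set V) := has
    have hbt' : b ∈ (↑t : Set V) := hbt
    have hcs : (↑s : Set V).ncard = n := by rw [Set.ncard_coe_finset, hs.2]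
    have hct : (↑t : Set V).ncard = n := by rw [Set.ncard_coe_finset, ht.2]
    obtain ⟨e, he⟩ := myEquivExists (n := n) s.finite_toSet t.finite_toSet hcs hct has' hbt'
    refine myExtend hhom s.finite_toSet t.finite_toSet hcs hct e ?_ has' hbt' he
    refine myCharClique e ?_ ?_
    · intro x y
      exact ⟨fun h => h.ne, fun h => hs.1 x.property y.property (fun hh => h (Subtype.ext_iff.mp (Subtype.ext hh)))⟩
    · intro x y
      exact ⟨fun h => h.ne, fun h => ht.1 x.property y.property (fun hh => h (Subtype.ext_iff.mp (Subtype.ext hh)))⟩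
  -- an independent n-set construction around vertices not in P
  have hApex : ∀ a, a ∉ P → ∃ (sa : Set V), sa.Finite ∧ sa.ncard = n ∧ a ∈ sa ∧
      (∀ x y : sa, M.Adj x.val y.val ↔ (x.val ≠ y.val ∧ x.val ≠ a ∧ y.val ≠ a)) := by
    intro a haP
    have hNfin : {w ∈ W | M.Adj a w}.Finite := myNbrsFinite hWadj hn1 haP
    have hXinf : ((W \ {w ∈ W | M.Adj a w}) \ {a}).Infinite :=
      (hWinf.diff hNfin).diff (Set.finite_singleton a)
    obtain ⟨C, hC, hCcard⟩ := hXinf.exists_subset_card_eq (n - 1)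
    have haC : a ∉ (↑C : Set V) := fun h => (hC h).2 rfl
    refine ⟨insert a ↑C, (C.finite_toSet.insert a), ?_, Set.mem_insert a _, ?_⟩
    · rw [Set.ncard_insert_of_notMem haC C.finite_toSet, Set.ncard_coe_finset, hCcard]
      omega
    · intro x y
      constructor
      · intro hadj
        refine ⟨hadj.ne, ?_, ?_⟩
        · intro hxa
          rcases x.property with hx | hx
          · rcases y.property with hy | hy
            · exact hadj.ne (hx.trans hy.symm)
            · have hadj' : M.Adj a y.val := by have h6 := hadj; rw [hxa] at h6; exact h6
              exact ((hC hy).1).2 ⟨(hC hy).1.1, hadj'⟩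
          · exact haC (hxa ▸ hx)
        · intro hya
          rcases y.property with hy | hy
          · rcases x.property with hx | hx
            · exact hadj.ne (hx.trans hy.symm)
            · have hadj' : M.Adj a x.val := by have h6 := hadj.symm; rw [hya] at h6; exact h6
              exact ((hC hx).1).2 ⟨(hC hx).1.1, hadj'⟩
          · exact haC (hya ▸ hy)
      · rintro ⟨hxy, hxa, hya⟩
        have hx : x.val ∈ (↑C : Set V) := x.property.resolve_left hxa
        have hy : y.val ∈ (↑C : Set V) := y.property.resolve_left hya
        exact hWadj (hC hx).1.1 (hC hy).1.1 hxy
  -- vertices not in P form a single orbit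
  have hQorb : ∀ a, a ∉ P → ∀ b, b ∉ P → SameOrbit M a b := by
    intro a haP b hbP
    obtain ⟨sa, hsaf, hsac, hasa, hchara⟩ := hApex a haP
    obtain ⟨sb, hsbf, hsbc, hbsb, hcharb⟩ := hApex b hbP
    obtain ⟨e, he⟩ := myEquivExists (n := n) hsaf hsbf hsac hsbc hasa hbsb
    exact myExtend hhom hsaf hsbf hsac hsbc e (myCharApex e hasa hbsb he hchara hcharb) hasa hbsb he
  -- Pᶜ is finite
  have hQfin : Pᶜ.Finite := by
    by_contra hinf
    replace hinf : Pᶜ.Infinite := hinf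
    have hno : ∀ s : Finset V, ↑s ⊆ Pᶜ → ¬ M.IsNClique n s := by
      intro s hsub hcl
      have hne : s.Nonempty := by
        rw [← Finset.card_pos, hcl.2]; omega
      obtain ⟨v, hv⟩ := hne
      exact hsub hv ⟨s, hcl, hv⟩
    obtain ⟨I, hIQ, hIcard, hIind⟩ := myRamsey M n n Pᶜ hinf hno
    have hIne : I.Nonempty := by rw [← Finset.card_pos, hIcard]; omega
    obtain ⟨q0, hq0⟩ := hIne
    have hNfin : (⋃ v ∈ (↑I : Set V), {w ∈ W | M.Adj v w}).Finite :=
      Set.Finite.biUnion I.finite_toSet (fun v hv => myNbrsFinite hWadj hn1 (hIQ hv))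
    have hXinf : ((W \ (⋃ v ∈ (↑I : Set V), {w ∈ W | M.Adj v w})) \ ↑I).Infinite :=
      (hWinf.diff hNfin).diff I.finite_toSet
    obtain ⟨c, hc⟩ := hXinf.nonempty
    have hcW : c ∈ W := hc.1.1
    have hcNadj : ∀ v ∈ (↑I : Set V), ¬ M.Adj v c := by
      intro v hv hadj
      exact hc.1.2 (Set.mem_biUnion hv ⟨hcW, hadj⟩)
    have hcI : c ∉ (↑I : Set V) := hc.2
    -- source set: I; target set: insert c (I.erase q0)
    set t : Set V := insert c (↑(I.erase q0) : Set V) with ht_def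
    have hct' : c ∉ (↑(I.erase q0) : Set V) := fun h => hcI (Finset.mem_coe.mpr (Finset.mem_of_mem_erase h))
    have htf : t.Finite := (I.erase q0).finite_toSet.insert c
    have htc : t.ncard = n := by
      rw [Set.ncard_insert_of_notMem hct' (I.erase q0).finite_toSet, Set.ncard_coe_finset,
        Finset.card_erase_of_mem hq0, hIcard]
      omega
    have hsc : (↑I : Set V).ncard = n := by rw [Set.ncard_coe_finset, hIcard]
    have hq0s : q0 ∈ (↑I : Set V) := hq0
    have hct2 : c ∈ t := Set.mem_insert c _
    obtain ⟨e, he⟩ := myEquivExists (n := n) I.finite_toSet htf hsc htc hq0s hct2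
    have hindS : ∀ x y : (↑I : Set V), ¬ M.Adj x.val y.val := by
      intro x y hadj
      by_cases hxy : x.val = y.val
      · exact M.loopless.irrefl x.val (hxy ▸ hadj)
      · exact hIind x.property y.property hxy hadj
    have hindT : ∀ x y : t, ¬ M.Adj x.val y.val := by
      intro x y hadj
      by_cases hxy : x.val = y.val
      · exact M.loopless.irrefl x.val (hxy ▸ hadj)
      · rcases x.property with hx | hx
        · rcases y.property with hy | hy
          · exact hxy (hx.trans hy.symm)
          · exact hcNadj _ (Finset.mem_coe.mpr (Finset.mem_of_mem_erase hy)) (hx ▸ hadj).symm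
        · rcases y.property with hy | hy
          · exact hcNadj _ (Finset.mem_coe.mpr (Finset.mem_of_mem_erase hx)) (hy ▸ hadj)
          · exact hIind (Finset.mem_coe.mpr (Finset.mem_of_mem_erase hx))
              (Finset.mem_coe.mpr (Finset.mem_of_mem_erase hy)) hxy hadj
    obtain ⟨g, hg⟩ := myExtend hhom I.finite_toSet htf hsc htc e
      (myCharEmpty e hindS hindT) hq0s hct2 he
    have hq0P : q0 ∈ P := by
      have : (g.symm) (g q0) ∈ P := by
        rw [hg]
        exact myInCl_iso g.symm (hWP c hcW)
      rwa [g.symm_apply_apply] at this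
    exact hIQ hq0 hq0P
  -- Pᶜ is nonempty
  have hQne : Pᶜ.Nonempty := by
    by_contra hempty
    rw [Set.not_nonempty_iff_eq_empty, ← Set.compl_univ, compl_inj_iff] at hempty
    apply h1
    intro s t hs ht hcs hct f
    obtain ⟨a, rfl⟩ := Set.ncard_eq_one.mp hcs
    obtain ⟨b, rfl⟩ := Set.ncard_eq_one.mp hct
    have haP : a ∈ P := hempty ▸ Set.mem_univ a
    have hbP : b ∈ P := hempty ▸ Set.mem_univ b
    have hfab : ((f ⟨a, rfl⟩ : ({b} : Set V)) : V) = b := (f ⟨a, rfl⟩).property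
    obtain ⟨g, hg⟩ := hPorb a haP b hbP
    refine ⟨g, ?_⟩
    intro x
    have hxa : x = (⟨a, rfl⟩ : ({a} : Set V)) := Subtype.ext x.property
    rw [hxa, hg, hfab]
  -- assemble
  obtain ⟨a0, ha0W⟩ := hWinf.nonempty
  have ha0P : a0 ∈ P := hWP a0 ha0W
  obtain ⟨b0, hb0Q⟩ := hQne
  refine ⟨P, Pᶜ, ⟨a0, ?_⟩, ⟨b0, ?_⟩, ?_, Set.union_compl_self P, Or.inr hQfin⟩
  · ext v
    constructor
    · intro hv
      exact hPorb a0 ha0P v hv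
    · rintro ⟨g, rfl⟩
      exact myInCl_iso g ha0P
  · ext v
    constructor
    · intro hv
      exact hQorb b0 hb0Q v hv
    · rintro ⟨g, rfl⟩
      intro hgP
      apply hb0Q
      have h5 : (g.symm) (g b0) ∈ P := myInCl_iso g.symm hgP
      rwa [g.symm_apply_apply] at h5
  · intro heq
    exact (heq ▸ ha0P : a0 ∈ Pᶜ) ha0P
end

section
/- Let M be a countably infinite graph that is ≥k-homogeneous but not 1-homogeneous, with K_∞ embeddable in M. Let p be the infinite vertex orbit and q the finite vertex orbit. Then no vertex of p is adjacent to any vertex of q. -/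
open SimpleGraph

/-- If `s` is an orbit and `v ∈ s`, then `s` is the orbit of `v`. -/
lemma orbit_eq_of_mem {V : Type} (M : SimpleGraph V) {s : Set V} (hs : IsOrbit M s)
    {v : V} (hv : v ∈ s) : s = {b | SameOrbit M v b} := by
  obtain ⟨a, rfl⟩ := hs
  obtain ⟨h, hh⟩ := hv
  ext b
  simp only [Set.mem_setOf_eq]
  constructor
  · rintro ⟨g, rfl⟩
    refine ⟨h.symm.trans g, ?_⟩
    have : h.symm v = a := by rw [← hh]; exact h.toEquiv.symm_apply_apply a
    simp [RelIso.trans_apply, this]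
  · rintro ⟨g, rfl⟩
    refine ⟨h.trans g, ?_⟩
    simp [RelIso.trans_apply, hh]

/-- Any two vertices of an `ℕ`-indexed induced clique are in the same orbit. -/
lemma clique_sameOrbit {V : Type} (M : SimpleGraph V) (k : ℕ) (hM : GeqHom M k)
    (c : ℕ → V) (hinj : Function.Injective c)
    (hadj : ∀ m n, m ≠ n → M.Adj (c m) (c n)) (i j : ℕ) :
    SameOrbit M (c i) (c j) := by
  classical
  rcases eq_or_ne i j with rfl | hij
  · exact ⟨Iso.refl, rfl⟩
  set N := max i j + 1 with hN
  set A : Finset ℕ := insert i (insert j ((Finset.range k).image (· + N))) with hA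
  have hiA : i ∈ A := by simp [hA]
  have hjA : j ∈ A := by simp [hA]
  have hcard : A.card = k + 2 := by
    rw [hA, Finset.card_insert_of_notMem, Finset.card_insert_of_notMem,
      Finset.card_image_of_injective _ (add_left_injective N), Finset.card_range]
    · simp only [Finset.mem_image, Finset.mem_range, not_exists, not_and]
      intro m _ hm
      omega
    · simp only [Finset.mem_insert, Finset.mem_image, Finset.mem_range, not_or, not_exists,
        not_and]
      exact ⟨hij, fun m _ hm => by omega⟩
  set s : Set V := c '' ↑A with hs
  have hsfin : s.Finite := (A.finite_toSet).image _
  have hsncard : s.ncard = k + 2 := by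
    rw [hs, Set.ncard_image_of_injective _ hinj, Set.ncard_coe_finset, hcard]
  have hci : c i ∈ s := ⟨i, hiA, rfl⟩
  have hcj : c j ∈ s := ⟨j, hjA, rfl⟩
  have key : ∀ u v : s, (M.induce s).Adj u v ↔ u ≠ v := by
    rintro ⟨u, hu⟩ ⟨v, hv⟩
    constructor
    · intro h hne
      rw [hne] at h
      exact (M.induce s).loopless.irrefl _ h
    · intro hne
      obtain ⟨mu, _, rfl⟩ := hu
      obtain ⟨mv, _, rfl⟩ := hv
      have : mu ≠ mv := by
        rintro rfl
        exact hne rfl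
      exact hadj mu mv this
  let x : s := ⟨c i, hci⟩
  let y : s := ⟨c j, hcj⟩
  let iso : M.induce s ≃g M.induce s :=
    { toEquiv := Equiv.swap x y
      map_rel_iff' := by
        intro u v
        rw [key, key, not_iff_not]
        exact (Equiv.swap x y).apply_eq_iff_eq }
  obtain ⟨g, hg⟩ := hM (k + 2) (by omega) s s hsfin hsfin hsncard hsncard iso
  refine ⟨g, ?_⟩
  have := hg x
  have hix : iso x = y := Equiv.swap_apply_left x y
  rw [hix] at this
  exact this

/-- Every vertex of an `ℕ`-indexed induced clique lies in the infinite orbit `p`. -/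
lemma clique_mem_p {V : Type} (M : SimpleGraph V) (k : ℕ) (hM : GeqHom M k)
    (p q : Set V) (hq : IsOrbit M q) (hqf : q.Finite) (hcover : p ∪ q = Set.univ)
    (c : ℕ → V) (hinj : Function.Injective c)
    (hadj : ∀ m n, m ≠ n → M.Adj (c m) (c n)) : ∀ i, c i ∈ p := by
  intro i
  have hmem : c i ∈ p ∪ q := hcover ▸ Set.mem_univ _
  rcases hmem with h | h
  · exact h
  · exfalso
    have hqe := orbit_eq_of_mem M hq h
    have hsub : Set.range c ⊆ q := by
      rintro _ ⟨m, rfl⟩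
      rw [hqe]
      exact clique_sameOrbit M k hM c hinj hadj i m
    exact hqf.not_infinite ((Set.infinite_range_of_injective hinj).mono hsub)

theorem stmt1 {V : Type} [Countable V] [Infinite V] (M : SimpleGraph V) (k : ℕ)
    (hM : GeqHom M k) (h1 : ¬ IsNHom M 1) (hK : HasKInf M)
    (p q : Set V) (hp : IsOrbit M p) (hq : IsOrbit M q)
    (hpi : p.Infinite) (hqf : q.Finite) (hcover : p ∪ q = Set.univ) :
    ∀ a ∈ p, ∀ b ∈ q, ¬ M.Adj a b := by
  classical
  -- p and q are disjoint
  have disj : ∀ v, v ∈ p → v ∈ q → False := by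
    intro v hvp hvq
    have hpq : p = q := (orbit_eq_of_mem M hp hvp).trans (orbit_eq_of_mem M hq hvq).symm
    exact hqf.not_infinite (hpq ▸ hpi)
  intro a ha b hb hab
  obtain ⟨f⟩ := hK
  set c : ℕ → V := fun n => f n with hc
  have hcinj : Function.Injective c := f.injective
  have hcadj : ∀ m n, m ≠ n → M.Adj (c m) (c n) := by
    intro m n hmn
    exact f.map_rel_iff.mpr (by simpa using hmn)
  have hcp : ∀ i, c i ∈ p := clique_mem_p M k hM p q hq hqf hcover c hcinj hcadj
  -- for each n, find an automorphism taking a to c n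
  have hex : ∀ n, ∃ g : M ≃g M, g a = c n := by
    intro n
    have := orbit_eq_of_mem M hp ha
    have : c n ∈ {b | SameOrbit M a b} := this ▸ hcp n
    exact this
  choose g hg using hex
  have hgbq : ∀ n, g n b ∈ q := by
    intro n
    rw [orbit_eq_of_mem M hq hb]
    exact ⟨g n, rfl⟩
  have hgadj : ∀ n, M.Adj (c n) (g n b) := by
    intro n
    rw [← hg n]
    exact (g n).map_rel_iff.mpr hab
  haveI : Finite q := hqf.to_subtype
  obtain ⟨y, hy⟩ := Finite.exists_infinite_fiber (fun n => (⟨g n b, hgbq n⟩ : q))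
  have hSinf : {n | g n b = (y : V)}.Infinite := by
    have heq : {n | g n b = (y : V)} = (fun n => (⟨g n b, hgbq n⟩ : q)) ⁻¹' {y} := by
      ext n
      simp [Subtype.ext_iff]
    rw [heq, ← Set.infinite_coe_iff]
    exact hy
  set e := hSinf.natEmbedding with he
  -- build a new clique containing y
  set c' : ℕ → V := fun n => Nat.casesOn n (y : V) (fun m => c (e m)) with hc'
  have hyval : ∀ m, g ((e m) : ℕ) b = (y : V) := fun m => (e m).2
  have hyadj : ∀ m, M.Adj (y : V) (c ((e m) : ℕ)) := by
    intro m
    have h := (hgadj ((e m) : ℕ)).symm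
    rw [hyval m] at h
    exact h
  have hc'inj : Function.Injective c' := by
    intro m n hmn
    cases m with
    | zero =>
      cases n with
      | zero => rfl
      | succ n => exact absurd hmn (M.ne_of_adj (hyadj n))
    | succ m =>
      cases n with
      | zero => exact absurd hmn.symm (M.ne_of_adj (hyadj m))
      | succ n =>
        have h1 : ((e m) : ℕ) = ((e n) : ℕ) := hcinj hmn
        have := e.injective (Subtype.ext h1)
        omega
  have hc'adj : ∀ m n, m ≠ n → M.Adj (c' m) (c' n) := by
    intro m n hmn
    cases m with
    | zero =>
      cases n with
      | zero => exact absurd rfl hmn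
      | succ n => exact hyadj n
    | succ m =>
      cases n with
      | zero => exact (hyadj m).symm
      | succ n =>
        refine hcadj _ _ fun hEq => ?_
        exact hmn (by rw [e.injective (Subtype.ext hEq)])
  have : c' 0 ∈ p := clique_mem_p M k hM p q hq hqf hcover c' hc'inj hc'adj 0
  exact disj (y : V) this y.2
end

section
/- Let M be a countably infinite graph that is ≥k-homogeneous but not 1-homogeneous with K_∞ ⊆ M, and let p be the infinite vertex orbit and q the finite vertex orbit. Then the induced subgraph on q is a homogeneous graph (every isomorphism between induced subgraphs of q extends to an automorphism of q). -/
open SimpleGraph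

section AuxStmt4

variable {V : Type} {M : SimpleGraph V}

lemma soX_symm {a b : V} (h : SameOrbit M a b) : SameOrbit M b a := by
  obtain ⟨g, hg⟩ := h
  exact ⟨g.symm, by rw [← hg]; exact g.symm_apply_apply a⟩

lemma soX_trans {a b c : V} (h1 : SameOrbit M a b) (h2 : SameOrbit M b c) :
    SameOrbit M a c := by
  obtain ⟨g, hg⟩ := h1
  obtain ⟨g', hg'⟩ := h2
  exact ⟨g.trans g', by simp [RelIso.trans_apply, hg, hg']⟩

lemma orbit_sameOrbit {q : Set V} (hq : IsOrbit M q) {a b : V} (ha : a ∈ q) (hb : b ∈ q) :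
    SameOrbit M a b := by
  obtain ⟨c, rfl⟩ := hq
  exact soX_trans (soX_symm ha) hb

lemma orbit_mapsTo {q : Set V} (hq : IsOrbit M q) (g : M ≃g M) {a : V} (ha : a ∈ q) :
    g a ∈ q := by
  obtain ⟨c, rfl⟩ := hq
  obtain ⟨h, hh⟩ := ha
  exact ⟨h.trans g, by simp [RelIso.trans_apply, hh]⟩

lemma orbit_disjoint {p q : Set V} (hp : IsOrbit M p) (hq : IsOrbit M q)
    (hpi : p.Infinite) (hqf : q.Finite) : ∀ x, x ∈ p → x ∉ q := by
  intro x hxp hxq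
  have hsub : p ⊆ q := by
    intro y hyp
    obtain ⟨aq, rfl⟩ := hq
    exact soX_trans hxq (orbit_sameOrbit hp hxp hyp)
  exact hpi (hqf.subset hsub)

lemma range_clique (f : (⊤ : SimpleGraph ℕ) ↪g M) {u v : V}
    (hu : u ∈ Set.range f) (hv : v ∈ Set.range f) (huv : u ≠ v) : M.Adj u v := by
  obtain ⟨i, rfl⟩ := hu
  obtain ⟨j, rfl⟩ := hv
  have hij : i ≠ j := fun h => huv (by rw [h])
  exact f.map_rel_iff.mpr (by simpa using hij)

end AuxStmt4

section IsoAux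

variable {V : Type} (M : SimpleGraph V)

/-- Iso between a nested induced subgraph and the induced subgraph on the image set. -/
def nestIso (q : Set V) (s : Set q) :
    (M.induce q).induce s ≃g M.induce (Subtype.val '' s) where
  toFun x := ⟨x.val.val, ⟨x.val, x.prop, rfl⟩⟩
  invFun y := ⟨⟨y.val, by obtain ⟨a, _, h⟩ := y.prop; exact h ▸ a.prop⟩, by
    obtain ⟨a, ha, h⟩ := y.prop
    have : (⟨y.val, by obtain ⟨a, _, h⟩ := y.prop; exact h ▸ a.prop⟩ : q) = a :=
      Subtype.ext h.symm
    rw [this]; exact ha⟩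
  left_inv x := Subtype.ext (Subtype.ext rfl)
  right_inv y := Subtype.ext rfl
  map_rel_iff' := by intro a b; simp [comap_adj]

lemma nestIso_symm_apply (q : Set V) (s : Set q) (y : ↥(Subtype.val '' s))
    (x : ↥s) (h : (x : q).val = y.val) : (nestIso M q s).symm y = x := by
  apply Subtype.ext; apply Subtype.ext
  exact h.symm

lemma nestIso_apply_val (q : Set V) (s : Set q) (x : ↥s) :
    ((nestIso M q s) x).val = (x : q).val := rfl

open Classical in
noncomputable def unionEquiv {A B X : Set V} (hA : Disjoint A X) (hB : Disjoint B X)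
    (e0 : ↥A ≃ ↥B) : ↥(A ∪ X) ≃ ↥(B ∪ X) :=
  (Equiv.Set.union hA).trans ((e0.sumCongr (Equiv.refl ↥X)).trans (Equiv.Set.union hB).symm)

lemma unionEquiv_apply_left {A B X : Set V} (hA : Disjoint A X) (hB : Disjoint B X)
    (e0 : ↥A ≃ ↥B) (a : ↥(A ∪ X)) (ha : ↑a ∈ A) :
    (unionEquiv hA hB e0 a : V) = (e0 ⟨a, ha⟩ : V) := by
  classical
  unfold unionEquiv
  simp only [Equiv.trans_apply]
  rw [Equiv.Set.union_apply_left hA ha]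
  rfl

lemma unionEquiv_apply_right {A B X : Set V} (hA : Disjoint A X) (hB : Disjoint B X)
    (e0 : ↥A ≃ ↥B) (a : ↥(A ∪ X)) (ha : ↑a ∈ X) :
    (unionEquiv hA hB e0 a : V) = (a : V) := by
  classical
  unfold unionEquiv
  simp only [Equiv.trans_apply]
  rw [Equiv.Set.union_apply_right hA ha]
  rfl

noncomputable def unionIso {A B X : Set V} (hA : Disjoint A X) (hB : Disjoint B X)
    (hAX : ∀ a ∈ A, ∀ x ∈ X, ¬ M.Adj a x) (hBX : ∀ b ∈ B, ∀ x ∈ X, ¬ M.Adj b x)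
    (φ : M.induce A ≃g M.induce B) : M.induce (A ∪ X) ≃g M.induce (B ∪ X) where
  toEquiv := unionEquiv hA hB φ.toEquiv
  map_rel_iff' := by
    intro u v
    simp only [comap_adj, Function.Embedding.coe_subtype, Equiv.coe_fn_mk]
    rcases u.prop with hu | hu <;> rcases v.prop with hv | hv
    · rw [unionEquiv_apply_left hA hB φ.toEquiv u hu, unionEquiv_apply_left hA hB φ.toEquiv v hv]
      have := φ.map_rel_iff (a := ⟨u, hu⟩) (b := ⟨v, hv⟩)
      simpa using this
    · rw [unionEquiv_apply_left hA hB φ.toEquiv u hu, unionEquiv_apply_right hA hB φ.toEquiv v hv]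
      constructor
      · intro h; exact absurd h (hBX _ (φ.toEquiv ⟨u, hu⟩).prop _ hv)
      · intro h; exact absurd h (hAX _ hu _ hv)
    · rw [unionEquiv_apply_right hA hB φ.toEquiv u hu, unionEquiv_apply_left hA hB φ.toEquiv v hv]
      constructor
      · intro h; exact absurd h.symm (hBX _ (φ.toEquiv ⟨v, hv⟩).prop _ hu)
      · intro h; exact absurd h.symm (hAX _ hv _ hu)
    · rw [unionEquiv_apply_right hA hB φ.toEquiv u hu, unionEquiv_apply_right hA hB φ.toEquiv v hv]

lemma unionIso_apply_left {A B X : Set V} (hA : Disjoint A X) (hB : Disjoint B X)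
    (hAX : ∀ a ∈ A, ∀ x ∈ X, ¬ M.Adj a x) (hBX : ∀ b ∈ B, ∀ x ∈ X, ¬ M.Adj b x)
    (φ : M.induce A ≃g M.induce B) (a : ↥(A ∪ X)) (ha : ↑a ∈ A) :
    (unionIso M hA hB hAX hBX φ a : V) = (φ ⟨a, ha⟩ : V) :=
  unionEquiv_apply_left hA hB φ.toEquiv a ha

def restrictIso (g : M ≃g M) (q : Set V) (h1 : ∀ a ∈ q, g a ∈ q)
    (h2 : ∀ a ∈ q, g.symm a ∈ q) : M.induce q ≃g M.induce q where
  toFun x := ⟨g x.val, h1 _ x.prop⟩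
  invFun x := ⟨g.symm x.val, h2 _ x.prop⟩
  left_inv x := Subtype.ext (g.toEquiv.symm_apply_apply _)
  right_inv x := Subtype.ext (g.toEquiv.apply_symm_apply _)
  map_rel_iff' := by intro a b; simpa [comap_adj] using g.map_rel_iff

end IsoAux

/-- Under the hypotheses of `stmt4`, there are no edges between `p` and `q`. -/
lemma no_edges {V : Type} {M : SimpleGraph V} {k : ℕ}
    (hM : GeqHom M k) (hk : 1 ≤ k) (hK : HasKInf M)
    {p q : Set V} (hp : IsOrbit M p) (hq : IsOrbit M q)
    (hpi : p.Infinite) (hqf : q.Finite) (hcover : p ∪ q = Set.univ) :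
    ∀ x ∈ p, ∀ b ∈ q, ¬ M.Adj x b := by
  intro x0 hx0 b0 hb0 hadj
  obtain ⟨F⟩ := hK
  set R : Set V := Set.range F with hR
  have hRinf : R.Infinite := Set.infinite_range_of_injective F.injective
  set Rp : Set V := R \ q with hRp
  have hRpinf : Rp.Infinite := hRinf.diff hqf
  have hRpp : Rp ⊆ p := by
    intro y hy
    have : y ∈ p ∪ q := hcover ▸ Set.mem_univ y
    rcases this with h | h
    · exact h
    · exact absurd h hy.2
  -- every vertex of p has a neighbour in q
  have key : ∀ y ∈ p, ∃ b ∈ q, M.Adj y b := by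
    intro y hy
    obtain ⟨g, hg⟩ := orbit_sameOrbit hp hx0 hy
    refine ⟨g b0, orbit_mapsTo hq g hb0, ?_⟩
    have := g.map_rel_iff (a := x0) (b := b0)
    rw [hg] at this
    exact this.mpr hadj
  haveI : Infinite ↥Rp := hRpinf.to_subtype
  haveI : Finite ↥q := hqf.to_subtype
  choose bf hbfq hbfadj using fun (y : ↥Rp) => key y.1 (hRpp y.2)
  obtain ⟨c, hc⟩ := Finite.exists_infinite_fiber (fun y : ↥Rp => (⟨bf y, hbfq y⟩ : ↥q))
  set W : Set V := Subtype.val '' ((fun y : ↥Rp => (⟨bf y, hbfq y⟩ : ↥q)) ⁻¹' {c}) with hW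
  have hWinf : W.Infinite :=
    (Set.infinite_coe_iff.mp hc).image (Set.injOn_of_injective Subtype.val_injective)
  have hWRp : W ⊆ Rp := by rintro w ⟨y, _, rfl⟩; exact y.2
  have hWadj : ∀ w ∈ W, M.Adj w c.val := by
    rintro w ⟨y, hy, rfl⟩
    have h1 : bf y = (c : V) := congrArg Subtype.val hy
    exact h1 ▸ hbfadj y
  obtain ⟨Z, hZW, hZfin, hZcard⟩ := hWinf.exists_subset_ncard_eq k
  have hZne : Z.Nonempty := by
    rw [← Set.ncard_pos hZfin, hZcard]; omega
  obtain ⟨y0, hy0⟩ := hZne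
  set Y : Set V := Z \ {y0} with hY
  have hYfin : Y.Finite := hZfin.diff
  have hcq : (c : V) ∈ q := c.prop
  have hcY : (c : V) ∉ Y := fun h => (hWRp (hZW h.1)).2 hcq
  set S : Set V := insert (c : V) Y with hS
  have hSfin : S.Finite := hYfin.insert _
  have hScard : S.ncard = k := by
    rw [hS, Set.ncard_insert_of_notMem hcY hYfin, hY,
      Set.ncard_diff_singleton_of_mem hy0, hZcard]
    omega
  -- both S and Z induce complete graphs
  have hZclique : ∀ u ∈ Z, ∀ v ∈ Z, u ≠ v → M.Adj u v := by
    intro u hu v hv huv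
    exact range_clique F (hWRp (hZW hu)).1 (hWRp (hZW hv)).1 huv
  have hSclique : ∀ u ∈ S, ∀ v ∈ S, u ≠ v → M.Adj u v := by
    intro u hu v hv huv
    rcases hu with rfl | hu <;> rcases hv with rfl | hv
    · exact absurd rfl huv
    · exact (hWadj v (hZW hv.1)).symm
    · exact hWadj u (hZW hu.1)
    · exact range_clique F (hWRp (hZW hu.1)).1 (hWRp (hZW hv.1)).1 huv
  haveI : Finite ↥S := hSfin.to_subtype
  haveI : Finite ↥Z := hZfin.to_subtype
  have hcards : Nat.card ↥S = Nat.card ↥Z := by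
    rw [Nat.card_coe_set_eq, Nat.card_coe_set_eq, hScard, hZcard]
  obtain ⟨e0⟩ := Finite.card_eq.mp hcards
  have hne_iff : ∀ u v : ↥S, (e0 u : V) ≠ (e0 v : V) ↔ (u : V) ≠ (v : V) := by
    intro u v
    constructor
    · intro h hc'; exact h (by rw [Subtype.ext hc'])
    · intro h hc'; exact h (congrArg Subtype.val (e0.injective (Subtype.ext hc')))
  have iso : M.induce S ≃g M.induce Z :=
    { toEquiv := e0
      map_rel_iff' := by
        intro u v
        simp only [comap_adj, Function.Embedding.coe_subtype]
        constructor
        · intro h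
          exact hSclique _ u.prop _ v.prop ((hne_iff u v).mp h.ne)
        · intro h
          exact hZclique _ (e0 u).prop _ (e0 v).prop ((hne_iff u v).mpr h.ne) }
  obtain ⟨g, hg⟩ := hM k le_rfl S Z hSfin hZfin hScard hZcard iso
  have hcS : (c : V) ∈ S := Set.mem_insert _ _
  have hgc : g (c : V) = (iso ⟨(c : V), hcS⟩ : V) := hg ⟨(c : V), hcS⟩
  have h1 : g (c : V) ∈ q := orbit_mapsTo hq g hcq
  have h2 : (iso ⟨(c : V), hcS⟩ : V) ∈ Z := (iso ⟨(c : V), hcS⟩).prop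
  rw [hgc] at h1
  exact (hWRp (hZW h2)).2 h1

theorem stmt4 {V : Type} [Countable V] [Infinite V] (M : SimpleGraph V) (k : ℕ)
    (hM : GeqHom M k) (h1 : ¬ IsNHom M 1) (hK : HasKInf M)
    (p q : Set V) (hp : IsOrbit M p) (hq : IsOrbit M q)
    (hpi : p.Infinite) (hqf : q.Finite) (hcover : p ∪ q = Set.univ) :
    IsHomogeneous (M.induce q) := by
  classical
  have hk1 : 1 ≤ k := by
    by_contra h
    exact h1 (hM 1 (by omega))
  have hnoedge := no_edges hM hk1 hK hp hq hpi hqf hcover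
  intro n s t hsf htf hscard htcard f
  set s' : Set V := Subtype.val '' s with hs'
  set t' : Set V := Subtype.val '' t with ht'
  have hs'q : s' ⊆ q := by rintro _ ⟨a, _, rfl⟩; exact a.prop
  have ht'q : t' ⊆ q := by rintro _ ⟨a, _, rfl⟩; exact a.prop
  obtain ⟨X, hXp, hXfin, hXcard⟩ := hpi.exists_subset_ncard_eq k
  have hpq := orbit_disjoint hp hq hpi hqf
  have hdisjsX : Disjoint s' X :=
    Set.disjoint_left.mpr (fun a ha hX => hpq a (hXp hX) (hs'q ha))
  have hdisjtX : Disjoint t' X :=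
    Set.disjoint_left.mpr (fun a ha hX => hpq a (hXp hX) (ht'q ha))
  have hAX : ∀ a ∈ s', ∀ x ∈ X, ¬ M.Adj a x :=
    fun a ha x hx h => hnoedge x (hXp hx) a (hs'q ha) h.symm
  have hBX : ∀ a ∈ t', ∀ x ∈ X, ¬ M.Adj a x :=
    fun a ha x hx h => hnoedge x (hXp hx) a (ht'q ha) h.symm
  set f' : M.induce s' ≃g M.induce t' :=
    ((nestIso M q s).symm.trans f).trans (nestIso M q t) with hf'
  set F := unionIso M hdisjsX hdisjtX hAX hBX f' with hF
  have hs'fin : s'.Finite := hsf.image _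
  have ht'fin : t'.Finite := htf.image _
  have hs'card : s'.ncard = n := by
    rw [hs', Set.ncard_image_of_injective s Subtype.val_injective, hscard]
  have ht'card : t'.ncard = n := by
    rw [ht', Set.ncard_image_of_injective t Subtype.val_injective, htcard]
  have hSfin : (s' ∪ X).Finite := hs'fin.union hXfin
  have hTfin : (t' ∪ X).Finite := ht'fin.union hXfin
  have hScard : (s' ∪ X).ncard = n + k := by
    rw [Set.ncard_union_eq hdisjsX hs'fin hXfin, hs'card, hXcard]
  have hTcard : (t' ∪ X).ncard = n + k := by
    rw [Set.ncard_union_eq hdisjtX ht'fin hXfin, ht'card, hXcard]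
  obtain ⟨g, hg⟩ := hM (n + k) (Nat.le_add_left k n) (s' ∪ X) (t' ∪ X)
    hSfin hTfin hScard hTcard F
  have hmem1 : ∀ a ∈ q, g a ∈ q := fun a ha => orbit_mapsTo hq g ha
  have hmem2 : ∀ a ∈ q, g.symm a ∈ q := fun a ha => orbit_mapsTo hq g.symm ha
  refine ⟨restrictIso M g q hmem1 hmem2, ?_⟩
  intro x
  apply Subtype.ext
  show (g (((x : ↥q) : V)) : V) = ((f x : ↥q) : V)
  have hmem : ((x : ↥q) : V) ∈ s' := ⟨x, x.prop, rfl⟩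
  have h0 := hg ⟨((x : ↥q) : V), Or.inl hmem⟩
  have h1 : (F ⟨((x : ↥q) : V), Or.inl hmem⟩ : V) = (f' ⟨((x : ↥q) : V), hmem⟩ : V) :=
    unionIso_apply_left M hdisjsX hdisjtX hAX hBX f' _ hmem
  have h2 : (f' ⟨((x : ↥q) : V), hmem⟩ : V) = ((f x : ↥q) : V) := by
    rw [hf']
    show ((nestIso M q t) (f ((nestIso M q s).symm ⟨((x : ↥q) : V), hmem⟩)) : V) = _
    rw [nestIso_symm_apply M q s ⟨((x : ↥q) : V), hmem⟩ x rfl]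
    rfl
  rw [h0, h1, h2]
end

section
/- For every t ≥ 1 and every finite homogeneous graph H, the disjoint union G_t ⊔ H is ≥k-homogeneous for k = 3·max(|H|, t), i.e., every isomorphism between finite induced subgraphs of size at least k extends to an automorphism. -/
open SimpleGraph

lemma extend_core {α : Type*} (A : Set α) (f : ↥A → α) (hf : Function.Injective f)
    (e₂ : ↥(Aᶜ) ≃ ↥((Set.range f)ᶜ)) : ∃ σ : α ≃ α, ∀ a : ↥A, σ a.val = f a := by
  classical
  refine ⟨(Equiv.Set.sumCompl A).symm.trans ((Equiv.sumCongr (Equiv.ofInjective f hf) e₂).trans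
      (Equiv.Set.sumCompl (Set.range f))), ?_⟩
  intro a
  have h : (Equiv.Set.sumCompl A).symm a.val = Sum.inl a := by
    rw [Equiv.Set.sumCompl_symm_apply_of_mem a.2]
  simp [h]

lemma extend_int {A : Set ℤ} (hA : A.Finite) (f : ↥A → ℤ) (hf : Function.Injective f) :
    ∃ σ : ℤ ≃ ℤ, ∀ a : ↥A, σ a.val = f a := by
  haveI : Finite ↥A := hA
  have h1 : (Aᶜ).Infinite := hA.infinite_compl
  have h2 : ((Set.range f)ᶜ).Infinite := (Set.finite_range f).infinite_compl
  haveI := h1.to_subtype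
  haveI := h2.to_subtype
  exact extend_core A f hf (Classical.choice nonempty_equiv_of_countable)

lemma extend_fin {β : Type*} [Fintype β] (S : Set β) (f : ↥S → β) (hf : Function.Injective f) :
    ∃ σ : β ≃ β, ∀ a : ↥S, σ a.val = f a := by
  classical
  have h3 : S.ncard = (Set.range f).ncard := by
    rw [← Nat.card_coe_set_eq, ← Nat.card_coe_set_eq]
    exact Nat.card_congr (Equiv.ofInjective f hf)
  have h1 := Set.ncard_add_ncard_compl S
  have h2 := Set.ncard_add_ncard_compl (Set.range f)
  have hc : Nat.card ↥(Sᶜ) = Nat.card ↥((Set.range f)ᶜ) := by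
    rw [Nat.card_coe_set_eq, Nat.card_coe_set_eq]; omega
  haveI : Finite ↥(Sᶜ) := Set.toFinite _
  haveI : Finite ↥((Set.range f)ᶜ) := Set.toFinite _
  exact extend_core S f hf (Classical.choice (Finite.card_eq.mp hc))

lemma gt_extend {t : ℕ} (sG : Set (ℤ × Fin t)) (hs : sG.Finite)
    (ψ : ↥sG → ℤ × Fin t)
    (h1 : ∀ x y : ↥sG, x.val.1 = y.val.1 ↔ (ψ x).1 = (ψ y).1)
    (hinj : Function.Injective ψ) :
    ∃ g : Gt t ≃g Gt t, ∀ x : ↥sG, g x.val = ψ x := by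
  classical
  set A : Set ℤ := Prod.fst '' sG with hA
  have hAfin : A.Finite := hs.image _
  have pick : ∀ a : ↥A, {x : ↥sG // x.val.1 = a.val} := fun a =>
    ⟨⟨a.2.choose, a.2.choose_spec.1⟩, a.2.choose_spec.2⟩
  set σ₀ : ↥A → ℤ := fun a => (ψ (pick a).val).1 with hσ₀
  have hσ₀inj : Function.Injective σ₀ := by
    intro a b hab
    have h := (h1 _ _).mpr hab
    apply Subtype.ext
    rw [← (pick a).2, ← (pick b).2, h]
  have hσ₀x : ∀ x : ↥sG, σ₀ ⟨x.val.1, ⟨x.val, x.2, rfl⟩⟩ = (ψ x).1 := by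
    intro x
    exact (h1 (pick ⟨x.val.1, ⟨x.val, x.2, rfl⟩⟩).val x).mp (pick _).2
  obtain ⟨σ, hσ⟩ := extend_int hAfin σ₀ hσ₀inj
  have hσx : ∀ x : ↥sG, σ x.val.1 = (ψ x).1 := fun x => by
    rw [hσ ⟨x.val.1, ⟨x.val, x.2, rfl⟩⟩]; exact hσ₀x x
  have key : ∀ a : ℤ, ∃ τa : Fin t ≃ Fin t,
      ∀ (j : Fin t) (h : (a, j) ∈ sG), τa j = (ψ ⟨(a, j), h⟩).2 := by
    intro a
    set S : Set (Fin t) := {j | (a, j) ∈ sG} with hS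
    have hminj : Function.Injective (fun j : ↥S => (ψ ⟨(a, j.val), j.2⟩).2) := by
      intro j k hjk
      have hfst : (ψ ⟨(a, j.val), j.2⟩).1 = (ψ ⟨(a, k.val), k.2⟩).1 :=
        (h1 ⟨(a, j.val), j.2⟩ ⟨(a, k.val), k.2⟩).mp rfl
      have : ψ ⟨(a, j.val), j.2⟩ = ψ ⟨(a, k.val), k.2⟩ := Prod.ext hfst hjk
      have := hinj this
      apply Subtype.ext
      simpa [Prod.ext_iff] using congrArg Subtype.val this
    obtain ⟨τa, hτa⟩ := extend_fin S _ hminj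
    exact ⟨τa, fun j h => hτa ⟨j, h⟩⟩
  choose τ hτ using key
  refine ⟨⟨Equiv.prodShear σ τ, ?_⟩, ?_⟩
  · intro x y
    show σ x.1 ≠ σ y.1 ↔ x.1 ≠ y.1
    exact σ.injective.ne_iff
  · rintro ⟨⟨a, j⟩, hx⟩
    show (σ a, τ a j) = ψ ⟨(a, j), hx⟩
    exact Prod.ext (hσx ⟨(a, j), hx⟩) (hτ a j hx)

lemma deg_transport {V : Type*} (M : SimpleGraph V) (s t' : Set V)
    (f : M.induce s ≃g M.induce t') (x : ↥s) :
    {y ∈ t' | M.Adj (f x).val y}.ncard = {y ∈ s | M.Adj x.val y}.ncard := by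
  have key : ∀ a b : ↥s, M.Adj (f a).val (f b).val ↔ M.Adj a.val b.val := by
    intro a b
    simpa [comap_adj] using f.map_adj_iff (v := a) (w := b)
  have hinj : Function.Injective (fun y : ↥s => (f y).val) :=
    fun a b hab => f.injective (Subtype.ext hab)
  have h1 : {y ∈ t' | M.Adj (f x).val y} = (fun y : ↥s => (f y).val) '' {y : ↥s | M.Adj x.val y.val} := by
    ext z
    constructor
    · rintro ⟨hz, hadj⟩
      refine ⟨f.symm ⟨z, hz⟩, ?_, by simp⟩
      have hv : (f (f.symm ⟨z, hz⟩)).val = z := by simp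
      exact (key x (f.symm ⟨z, hz⟩)).mp (by rw [hv]; exact hadj)
    · rintro ⟨y, hy, rfl⟩
      exact ⟨(f y).2, (key x y).mpr hy⟩
  have h2 : {y ∈ s | M.Adj x.val y} = Subtype.val '' {y : ↥s | M.Adj x.val y.val} := by
    ext z
    constructor
    · rintro ⟨hz, hadj⟩; exact ⟨⟨z, hz⟩, hadj, rfl⟩
    · rintro ⟨y, hy, rfl⟩; exact ⟨y.2, hy⟩
  rw [h1, h2, Set.ncard_image_of_injective _ hinj, Set.ncard_image_of_injective _ Subtype.val_injective]

theorem stmt5 (t : ℕ) (ht : 1 ≤ t) {W : Type} [Fintype W] (H : SimpleGraph W)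
    (hH : IsHomogeneous H) :
    GeqHom (Gt t ⊕g H) (3 * max (Fintype.card W) t) := by
  classical
  intro n hn s t' hsfin htfin hscard htcard f
  have hWmax : Fintype.card W ≤ max (Fintype.card W) t := le_max_left _ _
  have htmax : t ≤ max (Fintype.card W) t := le_max_right _ _
  have adj_ll : ∀ (p q : ℤ × Fin t), (Gt t ⊕g H).Adj (Sum.inl p) (Sum.inl q) ↔ p.1 ≠ q.1 :=
    fun p q => Iff.rfl
  have adj_rr : ∀ (v w : W), (Gt t ⊕g H).Adj (Sum.inr v) (Sum.inr w) ↔ H.Adj v w :=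
    fun v w => Iff.rfl
  have adj_rl : ∀ (w : W) (p : ℤ × Fin t), ¬ (Gt t ⊕g H).Adj (Sum.inr w) (Sum.inl p) :=
    fun w p h => Bool.false_ne_true h
  have cardU : (Set.univ : Set W).ncard = Fintype.card W := by
    rw [Set.ncard_univ, Nat.card_eq_fintype_card]
  have bound1 : ∀ (u : Set ((ℤ × Fin t) ⊕ W)), u.Finite → ∀ w : W, Sum.inr w ∈ u →
      {y ∈ u | (Gt t ⊕g H).Adj (Sum.inr w) y}.ncard + 1 ≤ Fintype.card W := by
    intro u hu w hw
    have hsub : {y ∈ u | (Gt t ⊕g H).Adj (Sum.inr w) y} ⊆ Sum.inr '' (Set.univ \ {w}) := by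
      rintro (p | v) ⟨hy, hadj⟩
      · exact absurd hadj (adj_rl w p)
      · have hv : H.Adj w v := hadj
        exact ⟨v, ⟨trivial, fun hvw => H.loopless.irrefl w (by rwa [Set.mem_singleton_iff.mp hvw] at hv)⟩, rfl⟩
    have h2 : ((Sum.inr '' (Set.univ \ {w} : Set W)) : Set ((ℤ × Fin t) ⊕ W)).ncard = Fintype.card W - 1 := by
      rw [Set.ncard_image_of_injective _ Sum.inr_injective,
        Set.ncard_diff_singleton_of_mem (Set.mem_univ w), cardU]
    have h3 := Set.ncard_le_ncard hsub (Set.toFinite _)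
    have h4 : 1 ≤ Fintype.card W := Fintype.card_pos_iff.mpr ⟨w⟩
    omega
  have bound2 : ∀ (u : Set ((ℤ × Fin t) ⊕ W)), u.Finite → ∀ p : ℤ × Fin t, Sum.inl p ∈ u →
      u.ncard ≤ {y ∈ u | (Gt t ⊕g H).Adj (Sum.inl p) y}.ncard + (Fintype.card W + t) := by
    intro u hu p hp
    set N := {y ∈ u | (Gt t ⊕g H).Adj (Sum.inl p) y} with hN
    set K1 : Set ((ℤ × Fin t) ⊕ W) := (fun j : Fin t => Sum.inl (p.1, j)) '' Set.univ with hK1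
    set K2 : Set ((ℤ × Fin t) ⊕ W) := Set.range Sum.inr with hK2
    have hsub : u ⊆ N ∪ (K1 ∪ K2) := by
      rintro (q | w) hy
      · by_cases hq : q.1 = p.1
        · exact Or.inr (Or.inl ⟨q.2, trivial, by rw [← hq]⟩)
        · exact Or.inl ⟨hy, (adj_ll p q).mpr (fun h => hq h.symm)⟩
      · exact Or.inr (Or.inr ⟨w, rfl⟩)
    have hK1card : K1.ncard = t := by
      rw [hK1, Set.ncard_image_of_injective _
        (fun a b hab => by simpa [Prod.ext_iff] using hab),
        Set.ncard_univ, Nat.card_eq_fintype_card, Fintype.card_fin]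
    have hK2card : K2.ncard = Fintype.card W := by
      rw [hK2, ← Set.image_univ, Set.ncard_image_of_injective _ Sum.inr_injective, cardU]
    have hNfin : N.Finite := hu.subset (Set.sep_subset _ _)
    have hK1fin : K1.Finite := (Set.finite_univ (α := Fin t)).image _
    have hK2fin : K2.Finite := Set.finite_range _
    have c1 : u.ncard ≤ (N ∪ (K1 ∪ K2)).ncard :=
      Set.ncard_le_ncard hsub (hNfin.union (hK1fin.union hK2fin))
    have c2 := Set.ncard_union_le N (K1 ∪ K2)
    have c3 := Set.ncard_union_le K1 K2
    omega
  have keyadj : ∀ a b : ↥s, (Gt t ⊕g H).Adj (f a).val (f b).val ↔ (Gt t ⊕g H).Adj a.val b.val := by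
    intro a b
    simpa [comap_adj] using f.map_adj_iff (v := a) (w := b)
  have hside : ∀ x : ↥s, ∀ p : ℤ × Fin t, x.val = Sum.inl p → ∃ q, (f x).val = Sum.inl q := by
    intro x p hx
    rcases hfx : (f x).val with q | w
    · exact ⟨q, rfl⟩
    · exfalso
      have b2 := bound2 s hsfin p (hx ▸ x.2)
      have b1 := bound1 t' htfin w (hfx ▸ (f x).2)
      have dt := deg_transport (Gt t ⊕g H) s t' f x
      rw [hfx] at dt
      rw [← hx] at b2
      rw [dt] at b1
      rw [hscard] at b2
      omega
  have hside' : ∀ x : ↥s, ∀ w : W, x.val = Sum.inr w → ∃ v, (f x).val = Sum.inr v := by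
    intro x w hx
    rcases hfx : (f x).val with q | v
    · exfalso
      have b1 := bound1 s hsfin w (hx ▸ x.2)
      have b2 := bound2 t' htfin q (hfx ▸ (f x).2)
      have dt := deg_transport (Gt t ⊕g H) s t' f x
      rw [hfx] at dt
      rw [← hx] at b1
      rw [dt] at b2
      rw [htcard] at b2
      omega
    · exact ⟨v, rfl⟩
  set sG : Set (ℤ × Fin t) := {p | Sum.inl p ∈ s} with hsGdef
  set sW : Set W := {w | Sum.inr w ∈ s} with hsWdef
  have hsGfin : sG.Finite := hsfin.preimage Sum.inl_injective.injOn
  have ψGspec : ∀ p : ↥sG, ∃ q, (f ⟨Sum.inl p.val, p.2⟩).val = Sum.inl q :=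
    fun p => hside ⟨Sum.inl p.val, p.2⟩ p.val rfl
  choose ψG hψG using ψGspec
  have hψGinj : Function.Injective ψG := by
    intro a b hab
    have h : (⟨Sum.inl a.val, a.2⟩ : ↥s) = ⟨Sum.inl b.val, b.2⟩ :=
      f.injective (Subtype.ext (by rw [hψG a, hψG b, hab]))
    exact Subtype.ext (Sum.inl_injective (congrArg Subtype.val h))
  have h1G : ∀ x y : ↥sG, x.val.1 = y.val.1 ↔ (ψG x).1 = (ψG y).1 := by
    intro x y
    have k := keyadj ⟨Sum.inl x.val, x.2⟩ ⟨Sum.inl y.val, y.2⟩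
    rw [hψG x, hψG y] at k
    rw [adj_ll, adj_ll] at k
    exact (not_iff_not.mp k).symm
  obtain ⟨gG, hgG⟩ := gt_extend sG hsGfin ψG h1G hψGinj
  have ψWspec : ∀ w : ↥sW, ∃ v, (f ⟨Sum.inr w.val, w.2⟩).val = Sum.inr v :=
    fun w => hside' ⟨Sum.inr w.val, w.2⟩ w.val rfl
  choose ψW hψW using ψWspec
  have hψWinj : Function.Injective ψW := by
    intro a b hab
    have h : (⟨Sum.inr a.val, a.2⟩ : ↥s) = ⟨Sum.inr b.val, b.2⟩ :=
      f.injective (Subtype.ext (by rw [hψW a, hψW b, hab]))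
    exact Subtype.ext (Sum.inr_injective (congrArg Subtype.val h))
  have hadjW : ∀ x y : ↥sW, H.Adj (ψW x) (ψW y) ↔ H.Adj x.val y.val := by
    intro x y
    have k := keyadj ⟨Sum.inr x.val, x.2⟩ ⟨Sum.inr y.val, y.2⟩
    rw [hψW x, hψW y] at k
    rw [adj_rr, adj_rr] at k
    exact k
  have cardEq : (Set.range ψW).ncard = sW.ncard := by
    rw [← Nat.card_coe_set_eq, ← Nat.card_coe_set_eq]
    exact (Nat.card_congr (Equiv.ofInjective ψW hψWinj)).symm
  obtain ⟨gH, hgH⟩ := hH sW.ncard sW (Set.range ψW) (Set.toFinite _) (Set.toFinite _) rfl cardEq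
    ⟨Equiv.ofInjective ψW hψWinj, by
      intro a b
      simp only [comap_adj, Function.Embedding.coe_subtype]
      rw [show ((Equiv.ofInjective ψW hψWinj) a : W) = ψW a from rfl,
          show ((Equiv.ofInjective ψW hψWinj) b : W) = ψW b from rfl]
      exact hadjW a b⟩
  have hgH' : ∀ x : ↥sW, gH x.val = ψW x := fun x => by
    rw [hgH x]; simp [Equiv.ofInjective]
  refine ⟨⟨Equiv.sumCongr gG.toEquiv gH.toEquiv, ?_⟩, ?_⟩
  · rintro (p | v) (q | w)
    · exact gG.map_adj_iff
    · exact Iff.rfl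
    · exact Iff.rfl
    · exact gH.map_adj_iff
  · rintro ⟨xv, hxv⟩
    rcases xv with p | w
    · have hp : p ∈ sG := hxv
      show Sum.inl (gG p) = _
      rw [hgG ⟨p, hp⟩]
      exact (hψG ⟨p, hp⟩).symm
    · have hw : w ∈ sW := hxv
      show Sum.inr (gH w) = _
      rw [hgH' ⟨w, hw⟩]
      exact (hψW ⟨w, hw⟩).symm
end

section
/- Let M be a countably infinite graph that is ≥k-homogeneous, 1-homogeneous but not 2-homogeneous, with K_∞ ⊆ M, and 2-orbits q_1, q_2, p_1, p_2 as defined. If (a,b) ∈ q_2 and (a,c) ∈ q_2 with b ≠ c, then (b,c) ∈ p_2. -/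
open SimpleGraph

open Classical in
lemma ext1 {V : Type} (M : SimpleGraph V) (u u' : V) (zs : List V)
    (h1 : (u :: zs).Nodup) (h2 : (u' :: zs).Nodup)
    (hadj : ∀ z ∈ zs, M.Adj u z ↔ M.Adj u' z)
    (hhom : IsNHom M (zs.length + 1)) :
    ∃ g : M ≃g M, g u = u' ∧ ∀ z ∈ zs, g z = z := by
  by_cases hdup : u = u'
  · subst hdup
    exact ⟨RelIso.refl M.Adj, rfl, fun z _ => rfl⟩
  obtain ⟨hu_not, hzs⟩ := List.nodup_cons.mp h1
  obtain ⟨hu'_not, -⟩ := List.nodup_cons.mp h2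
  let Z : Set V := ↑zs.toFinset
  have hmemZ : ∀ x : V, x ∈ Z ↔ x ∈ zs := by
    intro x; simp [Z]
  have hZfin : Z.Finite := (zs.toFinset).finite_toSet
  have huZ : u ∉ Z := fun h => hu_not ((hmemZ u).mp h)
  have hu'Z : u' ∉ Z := fun h => hu'_not ((hmemZ u').mp h)
  have hZcard : Z.ncard = zs.length := by
    rw [Set.ncard_coe_finset, List.toFinset_card_of_nodup hzs]
  have hsfin : (insert u Z).Finite := hZfin.insert u
  have htfin : (insert u' Z).Finite := hZfin.insert u'
  have hscard : (insert u Z).ncard = zs.length + 1 := by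
    rw [Set.ncard_insert_of_notMem huZ hZfin, hZcard]
  have htcard : (insert u' Z).ncard = zs.length + 1 := by
    rw [Set.ncard_insert_of_notMem hu'Z hZfin, hZcard]
  have hmem : ∀ x : V, x ∈ insert u Z → (if x = u then u' else x) ∈ insert u' Z := by
    intro x hx
    by_cases h : x = u
    · rw [if_pos h]; exact Set.mem_insert _ _
    · rw [if_neg h]
      rcases Set.mem_insert_iff.mp hx with h' | h'
      · exact absurd h' h
      · exact Set.mem_insert_of_mem _ h'
  have hmem' : ∀ x : V, x ∈ insert u' Z → (if x = u' then u else x) ∈ insert u Z := by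
    intro x hx
    by_cases h : x = u'
    · rw [if_pos h]; exact Set.mem_insert _ _
    · rw [if_neg h]
      rcases Set.mem_insert_iff.mp hx with h' | h'
      · exact absurd h' h
      · exact Set.mem_insert_of_mem _ h'
  let e : ↥(insert u Z) ≃ ↥(insert u' Z) :=
    { toFun := fun x => ⟨if x.1 = u then u' else x.1, hmem x.1 x.2⟩
      invFun := fun x => ⟨if x.1 = u' then u else x.1, hmem' x.1 x.2⟩
      left_inv := by
        rintro ⟨x, hx⟩
        by_cases h : x = u
        · simp [h]
        · have hxZ : x ∈ Z := by
            rcases Set.mem_insert_iff.mp hx with h' | h'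
            · exact absurd h' h
            · exact h'
          have hxu' : x ≠ u' := fun he => hu'Z (he ▸ hxZ)
          simp [h, hxu']
      right_inv := by
        rintro ⟨x, hx⟩
        by_cases h : x = u'
        · simp [h, hdup]
        · have hxZ : x ∈ Z := by
            rcases Set.mem_insert_iff.mp hx with h' | h'
            · exact absurd h' h
            · exact h'
          have hxu : x ≠ u := fun he => huZ (he ▸ hxZ)
          simp [h, hxu] }
  have ecoe : ∀ x : ↥(insert u Z), ((e x) : V) = if (x : V) = u then u' else (x : V) :=
    fun _ => rfl
  have key : ∀ x y : ↥(insert u Z), M.Adj (e x).1 (e y).1 ↔ M.Adj x.1 y.1 := by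
    rintro ⟨x, hx⟩ ⟨y, hy⟩
    rw [ecoe ⟨x, hx⟩, ecoe ⟨y, hy⟩]
    simp only []
    by_cases hxu : x = u <;> by_cases hyu : y = u
    · rw [if_pos hxu, if_pos hyu, hxu, hyu]
      constructor
      · intro h; exact absurd rfl h.ne
      · intro h; exact absurd rfl h.ne
    · have hyZ : y ∈ Z := by
        rcases Set.mem_insert_iff.mp hy with h' | h'
        · exact absurd h' hyu
        · exact h'
      rw [if_pos hxu, if_neg hyu, hxu]
      exact (hadj y ((hmemZ y).mp hyZ)).symm
    · have hxZ : x ∈ Z := by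
        rcases Set.mem_insert_iff.mp hx with h' | h'
        · exact absurd h' hxu
        · exact h'
      rw [if_neg hxu, if_pos hyu, hyu]
      rw [M.adj_comm x u', M.adj_comm x u]
      exact (hadj x ((hmemZ x).mp hxZ)).symm
    · rw [if_neg hxu, if_neg hyu]
  let iso : M.induce (insert u Z) ≃g M.induce (insert u' Z) :=
    { toEquiv := e
      map_rel_iff' := by
        intro x y
        exact key x y }
  obtain ⟨g, hg⟩ := hhom _ _ hsfin htfin hscard htcard iso
  refine ⟨g, ?_, ?_⟩
  · have := hg ⟨u, Set.mem_insert u Z⟩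
    rw [this]
    simp [iso, ecoe]
    exact if_pos rfl
  · intro z hz
    have hzZ : z ∈ Z := (hmemZ z).mpr hz
    have hzmem : z ∈ insert u Z := Set.mem_insert_of_mem _ hzZ
    have := hg ⟨z, hzmem⟩
    rw [this]
    have hzu : z ≠ u := fun he => huZ (he ▸ hzZ)
    simp [iso, ecoe, hzu]
    exact if_neg hzu





set_option linter.unusedSectionVars false
variable {V : Type} [Countable V] {M : SimpleGraph V}

lemma range_clique_s12 (f : (⊤ : SimpleGraph ℕ) ↪g M) :
    ∀ x ∈ Set.range f, ∀ y ∈ Set.range f, x ≠ y → M.Adj x y := by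
  rintro x ⟨m, rfl⟩ y ⟨n, rfl⟩ hne
  have hmn : m ≠ n := fun h => hne (by rw [h])
  exact f.map_rel_iff.mpr hmn

lemma range_infinite (f : (⊤ : SimpleGraph ℕ) ↪g M) : (Set.range f).Infinite :=
  Set.infinite_range_of_injective f.injective

lemma clique_emb {C : Set V} (hC : C.Infinite)
    (hcl : ∀ x ∈ C, ∀ y ∈ C, x ≠ y → M.Adj x y)
    {u v : V} (hu : u ∈ C) (hv : v ∈ C) : InCommonKInf M u v := by
  have hinf : Infinite ↥C := hC.to_subtype
  have hcount : Countable ↥C := Subtype.countable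
  obtain ⟨d⟩ := nonempty_denumerable_iff.mpr ⟨hcount, hinf⟩
  let e : ℕ ≃ ↥C := (Denumerable.eqv ↥C).symm
  have hinj : Function.Injective (fun n => (e n : V)) := by
    intro m n h
    exact e.injective (Subtype.ext h)
  have hmap : ∀ {m n : ℕ}, M.Adj (e m : V) (e n : V) ↔ (⊤ : SimpleGraph ℕ).Adj m n := by
    intro m n
    constructor
    · intro h
      have : (e m : V) ≠ (e n : V) := h.ne
      simp only [top_adj]
      intro he
      exact this (by rw [he])
    · intro h
      have h' : m ≠ n := by simpa using h
      have hmn : e m ≠ e n := fun he => h' (e.injective he)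
      have : (e m : V) ≠ (e n : V) := fun he => hmn (Subtype.ext he)
      exact hcl _ (e m).2 _ (e n).2 this
  let femb : (⊤ : SimpleGraph ℕ) ↪g M := ⟨⟨fun n => (e n : V), hinj⟩, hmap⟩
  refine ⟨femb, ⟨e.symm ⟨u, hu⟩, ?_⟩, ⟨e.symm ⟨v, hv⟩, ?_⟩⟩
  · show (e (e.symm ⟨u, hu⟩) : V) = u
    rw [Equiv.apply_symm_apply]
  · show (e (e.symm ⟨v, hv⟩) : V) = v
    rw [Equiv.apply_symm_apply]

lemma inck_symm {u v : V} (h : InCommonKInf M u v) : InCommonKInf M v u := by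
  obtain ⟨f, h1, h2⟩ := h; exact ⟨f, h2, h1⟩

lemma inck_map (g : M ≃g M) {u v : V} (h : InCommonKInf M u v) :
    InCommonKInf M (g u) (g v) := by
  obtain ⟨f, ⟨m, hm⟩, ⟨n, hn⟩⟩ := h
  exact ⟨g.toEmbedding.comp f, ⟨m, by simp [hm]⟩, ⟨n, by simp [hn]⟩⟩

lemma q2_symm {u v : V} (h : Q2Rel M u v) : Q2Rel M v u :=
  ⟨h.1.symm, fun hc => h.2 (inck_symm hc)⟩

lemma q2_map (g : M ≃g M) {u v : V} (h : Q2Rel M u v) : Q2Rel M (g u) (g v) := by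
  refine ⟨g.map_adj_iff.mpr h.1, fun hc => h.2 ?_⟩
  have := inck_map g.symm hc
  simpa using this

-- L1
lemma L1 {u v : V} (hq : Q2Rel M u v) (f : (⊤ : SimpleGraph ℕ) ↪g M)
    (hu : u ∈ Set.range f) : {x | x ∈ Set.range f ∧ M.Adj v x}.Finite := by
  by_contra hinf
  have hinf : {x | x ∈ Set.range ⇑f ∧ M.Adj v x}.Infinite := hinf
  set S := {x | x ∈ Set.range ⇑f ∧ M.Adj v x} with hS
  have hsub : S ⊆ insert u (insert v S) := fun x hx => by
    exact Set.mem_insert_of_mem _ (Set.mem_insert_of_mem _ hx)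
  have hCinf : (insert u (insert v S)).Infinite :=
    Set.Infinite.mono hsub hinf
  have hcl : ∀ x ∈ insert u (insert v S), ∀ y ∈ insert u (insert v S), x ≠ y → M.Adj x y := by
    intro x hx y hy hne
    rcases Set.mem_insert_iff.mp hx with rfl | hx' <;>
      rcases Set.mem_insert_iff.mp hy with rfl | hy'
    · exact absurd rfl hne
    · rcases Set.mem_insert_iff.mp hy' with rfl | hy''
      · exact hq.1
      · exact range_clique_s12 f _ hu _ hy''.1 hne
    · rcases Set.mem_insert_iff.mp hx' with rfl | hx''
      · exact hq.1.symm
      · exact (range_clique_s12 f _ hu _ hx''.1 hne.symm).symm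
    · rcases Set.mem_insert_iff.mp hx' with rfl | hx'' <;>
        rcases Set.mem_insert_iff.mp hy' with rfl | hy''
      · exact absurd rfl hne
      · exact hy''.2
      · exact hx''.2.symm
      · exact range_clique_s12 f _ hx''.1 _ hy''.1 hne
  exact hq.2 (clique_emb hCinf hcl (Set.mem_insert _ _)
    (Set.mem_insert_of_mem _ (Set.mem_insert _ _)))

-- list picking
lemma pick {A : Set V} (hA : A.Infinite) (j : ℕ) :
    ∃ l : List V, l.Nodup ∧ l.length = j ∧ ∀ x ∈ l, x ∈ A := by
  induction j generalizing A with
  | zero => exact ⟨[], List.nodup_nil, rfl, by simp⟩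
  | succ n ih =>
    obtain ⟨x, hx⟩ := hA.nonempty
    obtain ⟨l, hnd, hlen, hmem⟩ := ih (hA.diff (Set.finite_singleton x))
    refine ⟨x :: l, List.nodup_cons.mpr ⟨?_, hnd⟩, by simp [hlen], ?_⟩
    · intro hxl
      exact (hmem x hxl).2 rfl
    · intro y hy
      rcases List.mem_cons.mp hy with rfl | hy'
      · exact hx
      · exact (hmem y hy').1

lemma image_inf {S : Set V} (hS : S.Infinite) (F : V → V)
    (hfib : ∀ x, {f | f ∈ S ∧ F f = x}.Finite) : (F '' S).Infinite := by
  by_contra hfin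
  rw [Set.not_infinite] at hfin
  have : S ⊆ ⋃ x ∈ F '' S, {f | f ∈ S ∧ F f = x} := by
    intro f hf
    exact Set.mem_biUnion ⟨f, hf, rfl⟩ ⟨hf, rfl⟩
  exact hS (Set.Finite.subset (hfin.biUnion fun x _ => hfib x) this)
-- L0: every vertex lies in an infinite clique
lemma L0 (hK : HasKInf M) (h1 : IsNHom M 1) (v : V) :
    ∃ f : (⊤ : SimpleGraph ℕ) ↪g M, v ∈ Set.range f := by
  obtain ⟨f₀⟩ := hK
  obtain ⟨g, hg, -⟩ := ext1 M (f₀ 0) v [] (List.nodup_cons.mpr ⟨by simp, List.nodup_nil⟩)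
    (List.nodup_cons.mpr ⟨by simp, List.nodup_nil⟩) (by simp) h1
  exact ⟨g.toEmbedding.comp f₀, 0, by simp [hg]⟩

-- L2 (cross-finiteness)
lemma L2 {k : ℕ} (hM : GeqHom M k) {u v : V} (hq : Q2Rel M u v)
    (fR : (⊤ : SimpleGraph ℕ) ↪g M) (hu : u ∈ Set.range fR)
    {y : V} (hy : y ∈ Set.range fR) (hyu : y ≠ u)
    (fR' : (⊤ : SimpleGraph ℕ) ↪g M) (hv : v ∈ Set.range fR') :
    {x | x ∈ Set.range fR' ∧ M.Adj y x}.Finite := by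
  by_contra hinf
  have hinf : {x | x ∈ Set.range ⇑fR' ∧ M.Adj y x}.Infinite := hinf
  have hufin : {x | x ∈ Set.range ⇑fR' ∧ M.Adj u x}.Finite := L1 (q2_symm hq) fR' hv
  have hS : ({x | x ∈ Set.range ⇑fR' ∧ M.Adj y x} \
      ({u, v, y} ∪ {x | x ∈ Set.range ⇑fR' ∧ M.Adj u x})).Infinite :=
    hinf.diff (Set.Finite.union (Set.toFinite _) hufin)
  obtain ⟨sl, hnd, hlen, hmem⟩ := pick hS k
  have hsprop : ∀ x ∈ sl, x ∈ Set.range ⇑fR' ∧ M.Adj y x ∧ x ≠ u ∧ x ≠ v ∧ x ≠ y ∧ ¬ M.Adj u x := by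
    intro x hx
    obtain ⟨⟨h1', h2'⟩, h3'⟩ := hmem x hx
    simp only [Set.mem_union, Set.mem_insert_iff, Set.mem_setOf_eq, Set.mem_singleton_iff,
      not_or] at h3'
    exact ⟨h1', h2', h3'.1.1, h3'.1.2.1, h3'.1.2.2, fun h => h3'.2 ⟨h1', h⟩⟩
  -- EXT1 : mover y ↦ v over fixed u :: sl
  have hvy : v ≠ y := by
    intro he
    exact hq.2 ⟨fR, hu, he ▸ hy⟩
  obtain ⟨g, hgy, hgfix⟩ := ext1 M y v (u :: sl)
    (by
      refine List.nodup_cons.mpr ⟨?_, List.nodup_cons.mpr ⟨?_, hnd⟩⟩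
      · intro h
        rcases List.mem_cons.mp h with h' | h'
        · exact hyu h'
        · exact (hsprop _ h').2.2.2.2.1 rfl
      · intro h
        exact (hsprop _ h).2.2.1 rfl)
    (by
      refine List.nodup_cons.mpr ⟨?_, List.nodup_cons.mpr ⟨?_, hnd⟩⟩
      · intro h
        rcases List.mem_cons.mp h with h' | h'
        · exact hq.1.ne' h'
        · exact (hsprop _ h').2.2.2.1 rfl
      · intro h
        exact (hsprop _ h).2.2.1 rfl)
    (by
      intro z hz
      rcases List.mem_cons.mp hz with h | hz'
      · rw [h]
        constructor
        · intro _; exact hq.1.symm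
        · intro _
          exact range_clique_s12 fR y hy u hu hyu
      · obtain ⟨hz1, hz2, _, hz4, _, _⟩ := hsprop _ hz'
        constructor
        · intro _
          exact range_clique_s12 fR' v hv z hz1 (Ne.symm hz4)
        · intro _; exact hz2)
    (by
      have : (u :: sl).length + 1 = k + 2 := by simp [hlen]
      rw [this]
      exact hM (k + 2) (by omega))
  -- contradiction
  have : InCommonKInf M u y := ⟨fR, hu, hy⟩
  have h2 := inck_map g this
  rw [hgfix u List.mem_cons_self, hgy] at h2
  exact hq.2 h2
lemma iso_symm_eq (g : M ≃g M) {x y : V} (h : g x = y) : g.symm y = x := by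
  rw [← h]; exact g.symm_apply_apply x

lemma step1 {k : ℕ} (hM : GeqHom M k) (h1 : IsNHom M 1) (hK : HasKInf M)
    {a b c : V} (hne : b ≠ c) (hab : Q2Rel M a b) (hac : Q2Rel M a c) :
    ¬ M.Adj b c := by
  intro hbc
  obtain ⟨fG, haG⟩ := L0 hK h1 a
  obtain ⟨fF, hbF⟩ := L0 hK h1 b
  -- Part 1a : b and c lie in a common K_inf
  have hNbG : {x | x ∈ Set.range ⇑fG ∧ M.Adj b x}.Finite := L1 hab fG haG
  have hNcG : {x | x ∈ Set.range ⇑fG ∧ M.Adj c x}.Finite := L1 hac fG haG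
  have hYinf : ((Set.range ⇑fG) \ (({a, b, c} : Set V) ∪
      ({x | x ∈ Set.range ⇑fG ∧ M.Adj b x} ∪ {x | x ∈ Set.range ⇑fG ∧ M.Adj c x}))).Infinite :=
    (range_infinite fG).diff ((Set.toFinite _).union (hNbG.union hNcG))
  obtain ⟨yl, hylnd, hyllen, hylmem⟩ := pick hYinf k
  have hyprop : ∀ y ∈ yl, y ∈ Set.range ⇑fG ∧ y ≠ a ∧ y ≠ b ∧ y ≠ c ∧
      ¬ M.Adj b y ∧ ¬ M.Adj c y := by
    intro y hy
    have h := hylmem y hy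
    simp only [Set.mem_diff, Set.mem_union, Set.mem_insert_iff, Set.mem_singleton_iff,
      Set.mem_setOf_eq, not_or] at h
    exact ⟨h.1, h.2.1.1, h.2.1.2.1, h.2.1.2.2, fun hh => h.2.2.1 ⟨h.1, hh⟩,
      fun hh => h.2.2.2 ⟨h.1, hh⟩⟩
  have hBfin : (⋃ y ∈ {x | x ∈ yl}, {x | x ∈ Set.range ⇑fF ∧ M.Adj y x}).Finite := by
    refine Set.Finite.biUnion (List.finite_toSet yl) ?_
    intro y hy
    exact L2 hM hab fG haG (hyprop y hy).1 (hyprop y hy).2.1 fF hbF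
  have hC'inf : ((Set.range ⇑fF) \ (({b, c} : Set V) ∪ ({x | x ∈ yl} ∪
      (⋃ y ∈ {x | x ∈ yl}, {x | x ∈ Set.range ⇑fF ∧ M.Adj y x})))).Infinite :=
    (range_infinite fF).diff ((Set.toFinite _).union ((List.finite_toSet yl).union hBfin))
  obtain ⟨c', hc'⟩ := hC'inf.nonempty
  have hc'F : c' ∈ Set.range ⇑fF := hc'.1
  have hc'prop : c' ≠ b ∧ c' ≠ c ∧ c' ∉ yl ∧ ∀ y ∈ yl, ¬ M.Adj y c' := by
    have h := hc'
    simp only [Set.mem_diff, Set.mem_union, Set.mem_insert_iff, Set.mem_singleton_iff,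
      Set.mem_setOf_eq, Set.mem_iUnion, not_or, not_exists] at h
    refine ⟨h.2.1.1, h.2.1.2, h.2.2.1, ?_⟩
    intro y hy hadj
    exact h.2.2.2 y hy ⟨h.1, hadj⟩
  obtain ⟨g1, hg1c, hg1fix⟩ := ext1 M c c' (b :: yl)
    (by
      refine List.nodup_cons.mpr ⟨?_, List.nodup_cons.mpr ⟨?_, hylnd⟩⟩
      · intro h
        rcases List.mem_cons.mp h with h' | h'
        · exact hne h'.symm
        · exact (hyprop _ h').2.2.2.1 rfl
      · intro h
        exact (hyprop _ h).2.2.1 rfl)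
    (by
      refine List.nodup_cons.mpr ⟨?_, List.nodup_cons.mpr ⟨?_, hylnd⟩⟩
      · intro h
        rcases List.mem_cons.mp h with h' | h'
        · exact hc'prop.1 h'
        · exact hc'prop.2.2.1 h'
      · intro h
        exact (hyprop _ h).2.2.1 rfl)
    (by
      intro z hz
      rcases List.mem_cons.mp hz with h | hz'
      · rw [h]
        exact iff_of_true hbc.symm (range_clique_s12 fF c' hc'F b hbF hc'prop.1)
      · refine iff_of_false ?_ ?_
        · intro hh
          exact (hyprop _ hz').2.2.2.2.2 hh
        · intro hh
          exact hc'prop.2.2.2 z hz' hh.symm)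
    (by
      have : (b :: yl).length + 1 = k + 2 := by simp [hyllen]
      rw [this]
      exact hM (k + 2) (by omega))
  have hBC : InCommonKInf M b c := by
    have h := inck_map g1.symm ⟨fF, hbF, hc'F⟩
    rw [iso_symm_eq g1 (hg1fix b List.mem_cons_self), iso_symm_eq g1 hg1c] at h
    exact h
  obtain ⟨w, hbw, hcw⟩ := hBC
  -- Part 1c : for every f in range w besides b, c there is a common q2-neighbour of b and f
  have hex : ∀ f, f ∈ (Set.range ⇑w \ ({b, c} : Set V)) →
      ∃ x, Q2Rel M x b ∧ Q2Rel M x f := by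
    intro f hf
    have hfw : f ∈ Set.range ⇑w := hf.1
    have hfb : f ≠ b := by
      intro h; exact hf.2 (by rw [h]; exact Set.mem_insert _ _)
    have hfc : f ≠ c := by
      intro h; exact hf.2 (by rw [h]; exact Set.mem_insert_of_mem _ rfl)
    have hTinf : ((Set.range ⇑w) \ ({b, c, f} : Set V)).Infinite :=
      (range_infinite w).diff (Set.toFinite _)
    obtain ⟨tl, htlnd, htllen, htlmem⟩ := pick hTinf k
    have htprop : ∀ t ∈ tl, t ∈ Set.range ⇑w ∧ t ≠ b ∧ t ≠ c ∧ t ≠ f := by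
      intro t ht
      have h := htlmem t ht
      simp only [Set.mem_diff, Set.mem_insert_iff, Set.mem_singleton_iff, not_or] at h
      exact ⟨h.1, h.2.1, h.2.2.1, h.2.2.2⟩
    obtain ⟨gf, hgfc, hgffix⟩ := ext1 M c f (b :: tl)
      (by
        refine List.nodup_cons.mpr ⟨?_, List.nodup_cons.mpr ⟨?_, htlnd⟩⟩
        · intro h
          rcases List.mem_cons.mp h with h' | h'
          · exact hne h'.symm
          · exact (htprop _ h').2.2.1 rfl
        · intro h
          exact (htprop _ h).2.1 rfl)
      (by
        refine List.nodup_cons.mpr ⟨?_, List.nodup_cons.mpr ⟨?_, htlnd⟩⟩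
        · intro h
          rcases List.mem_cons.mp h with h' | h'
          · exact hfb h'
          · exact (htprop _ h').2.2.2 rfl
        · intro h
          exact (htprop _ h).2.1 rfl)
      (by
        intro z hz
        rcases List.mem_cons.mp hz with h | hz'
        · rw [h]
          exact iff_of_true hbc.symm (range_clique_s12 w f hfw b hbw hfb)
        · obtain ⟨hzw, hzb, hzc, hzf⟩ := htprop _ hz'
          exact iff_of_true (range_clique_s12 w c hcw z hzw (Ne.symm hzc))
            (range_clique_s12 w f hfw z hzw (Ne.symm hzf)))
      (by
        have : (b :: tl).length + 1 = k + 2 := by simp [htllen]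
        rw [this]
        exact hM (k + 2) (by omega))
    refine ⟨gf a, ?_, ?_⟩
    · have h := q2_map gf hab
      rwa [hgffix b List.mem_cons_self] at h
    · have h := q2_map gf hac
      rwa [hgfc] at h
  -- the supply of q2-neighbours of b
  classical
  set S : Set V := Set.range ⇑w \ ({b, c} : Set V) with hSdef
  have hSinf : S.Infinite := (range_infinite w).diff (Set.toFinite _)
  let F : V → V := fun f => if h : f ∈ S then (hex f h).choose else b
  have hF : ∀ f ∈ S, Q2Rel M (F f) b ∧ Q2Rel M (F f) f := by
    intro f hf
    simp only [F, dif_pos hf]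
    exact (hex f hf).choose_spec
  have hTinf : (F '' S).Infinite := by
    refine image_inf hSinf F ?_
    intro x
    by_cases hx : ∃ f₀, f₀ ∈ S ∧ F f₀ = x
    · obtain ⟨f₀, hf₀S, hf₀⟩ := hx
      have hq2xb : Q2Rel M x b := hf₀ ▸ (hF f₀ hf₀S).1
      refine Set.Finite.subset (L1 (q2_symm hq2xb) w hbw) ?_
      intro f hf
      refine ⟨hf.1.1, ?_⟩
      have := (hF f hf.1).2.1
      rwa [hf.2] at this
    · refine Set.Finite.subset (Set.finite_empty) ?_
      intro f hf
      exact absurd ⟨f, hf.1, hf.2⟩ hx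
  -- q2-neighbours of b adjacent to a are few
  have hT'a : {x | x ∈ F '' S ∧ M.Adj x a}.Finite := by
    by_contra hinf
    have hinf : ({x | x ∈ F '' S ∧ M.Adj x a} \ ({c} : Set V)).Infinite :=
      (Set.Infinite.mono (fun x hx => hx) hinf).diff (Set.toFinite _)
    obtain ⟨tl, htlnd, htllen, htlmem⟩ := pick hinf k
    have htprop : ∀ t ∈ tl, Q2Rel M t b ∧ M.Adj t a ∧ t ≠ c := by
      intro t ht
      have h := htlmem t ht
      simp only [Set.mem_diff, Set.mem_setOf_eq, Set.mem_singleton_iff] at h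
      obtain ⟨⟨hmem', hadj'⟩, hne'⟩ := h
      obtain ⟨f, hfS, hfeq⟩ := hmem'
      exact ⟨hfeq ▸ (hF f hfS).1, hadj', hne'⟩
    obtain ⟨g2, hg2b, hg2fix⟩ := ext1 M b a (c :: tl)
      (by
        refine List.nodup_cons.mpr ⟨?_, List.nodup_cons.mpr ⟨?_, htlnd⟩⟩
        · intro h
          rcases List.mem_cons.mp h with h' | h'
          · exact hne h'
          · exact (htprop _ h').1.1.ne rfl
        · intro h
          exact (htprop _ h).2.2 rfl)
      (by
        refine List.nodup_cons.mpr ⟨?_, List.nodup_cons.mpr ⟨?_, htlnd⟩⟩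
        · intro h
          rcases List.mem_cons.mp h with h' | h'
          · exact hac.1.ne h'
          · exact (htprop _ h').2.1.ne rfl
        · intro h
          exact (htprop _ h).2.2 rfl)
      (by
        intro z hz
        rcases List.mem_cons.mp hz with h | hz'
        · rw [h]
          exact iff_of_true hbc hac.1
        · exact iff_of_true (htprop _ hz').1.1.symm (htprop _ hz').2.1.symm)
      (by
        have : (c :: tl).length + 1 = k + 2 := by simp [htllen]
        rw [this]
        exact hM (k + 2) (by omega))
    have h := inck_map g2 ⟨w, hbw, hcw⟩
    rw [hg2b, hg2fix c List.mem_cons_self] at h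
    exact hac.2 h
  -- pick the companions
  have hXinf : ((F '' S) \ (({a, c} : Set V) ∪ {x | x ∈ F '' S ∧ M.Adj x a})).Infinite :=
    hTinf.diff ((Set.toFinite _).union hT'a)
  obtain ⟨xl, hxlnd, hxllen, hxlmem⟩ := pick hXinf k
  have hxprop : ∀ x ∈ xl, Q2Rel M x b ∧ x ≠ a ∧ x ≠ c ∧ ¬ M.Adj x a := by
    intro x hx
    have h := hxlmem x hx
    simp only [Set.mem_diff, Set.mem_union, Set.mem_insert_iff, Set.mem_singleton_iff,
      Set.mem_setOf_eq, not_or] at h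
    obtain ⟨hmem', hne1, hne2⟩ := h
    obtain ⟨f, hfS, hfeq⟩ := hmem'
    refine ⟨hfeq ▸ (hF f hfS).1, hne1.1, hne1.2, fun hh => hne2 ⟨⟨f, hfS, hfeq⟩, hh⟩⟩
  have hB2fin : (⋃ x ∈ {y | y ∈ xl}, {y | y ∈ Set.range ⇑w ∧ M.Adj x y}).Finite := by
    refine Set.Finite.biUnion (List.finite_toSet xl) ?_
    intro x hx
    exact L1 (q2_symm (hxprop x hx).1) w hbw
  have hNaw : {y | y ∈ Set.range ⇑w ∧ M.Adj a y}.Finite := L1 (q2_symm hab) w hbw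
  have hf0inf : ((Set.range ⇑w) \ (({b, c} : Set V) ∪ ({y | y ∈ xl} ∪
      ({y | y ∈ Set.range ⇑w ∧ M.Adj a y} ∪
        (⋃ x ∈ {y | y ∈ xl}, {y | y ∈ Set.range ⇑w ∧ M.Adj x y}))))).Infinite :=
    (range_infinite w).diff ((Set.toFinite _).union ((List.finite_toSet xl).union
      (hNaw.union hB2fin)))
  obtain ⟨f₀, hf₀⟩ := hf0inf.nonempty
  have hf₀w : f₀ ∈ Set.range ⇑w := hf₀.1
  have hf₀prop : f₀ ≠ b ∧ f₀ ≠ c ∧ f₀ ∉ xl ∧ ¬ M.Adj a f₀ ∧ ∀ x ∈ xl, ¬ M.Adj x f₀ := by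
    have h := hf₀
    simp only [Set.mem_diff, Set.mem_union, Set.mem_insert_iff, Set.mem_singleton_iff,
      Set.mem_setOf_eq, Set.mem_iUnion, not_or, not_exists] at h
    refine ⟨h.2.1.1, h.2.1.2, h.2.2.1, fun hh => h.2.2.2.1 ⟨h.1, hh⟩, ?_⟩
    intro x hx hadj
    exact h.2.2.2.2 x hx ⟨h.1, hadj⟩
  obtain ⟨g3, hg3a, hg3fix⟩ := ext1 M a f₀ (b :: xl)
    (by
      refine List.nodup_cons.mpr ⟨?_, List.nodup_cons.mpr ⟨?_, hxlnd⟩⟩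
      · intro h
        rcases List.mem_cons.mp h with h' | h'
        · exact hab.1.ne h'
        · exact (hxprop _ h').2.1 rfl
      · intro h
        exact (hxprop _ h).1.1.ne rfl)
    (by
      refine List.nodup_cons.mpr ⟨?_, List.nodup_cons.mpr ⟨?_, hxlnd⟩⟩
      · intro h
        rcases List.mem_cons.mp h with h' | h'
        · exact hf₀prop.1 h'
        · exact hf₀prop.2.2.1 h'
      · intro h
        exact (hxprop _ h).1.1.ne rfl)
    (by
      intro z hz
      rcases List.mem_cons.mp hz with h | hz'
      · rw [h]
        exact iff_of_true hab.1 (range_clique_s12 w f₀ hf₀w b hbw hf₀prop.1)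
      · refine iff_of_false ?_ ?_
        · intro hh
          exact (hxprop _ hz').2.2.2 hh.symm
        · intro hh
          exact hf₀prop.2.2.2.2 z hz' hh.symm)
    (by
      have : (b :: xl).length + 1 = k + 2 := by simp [hxllen]
      rw [this]
      exact hM (k + 2) (by omega))
  have h := inck_map g3.symm ⟨w, hf₀w, hbw⟩
  rw [iso_symm_eq g3 hg3a, iso_symm_eq g3 (hg3fix b List.mem_cons_self)] at h
  exact hab.2 h
theorem stmt12 {V : Type} [Countable V] [Infinite V] (M : SimpleGraph V) (k : ℕ)
    (hM : GeqHom M k) (h1 : IsNHom M 1) (h2 : ¬ IsNHom M 2) (hK : HasKInf M) :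
    ∀ a b c : V, b ≠ c → Q2Rel M a b → Q2Rel M a c → P2Rel M k b c := by
  intro a b c hne hab hac
  have hnadj : ¬ M.Adj b c := step1 hM h1 hK hne hab hac
  refine ⟨hne, hnadj, ?_⟩
  intro hp1
  obtain ⟨-, -, hforall⟩ := hp1
  obtain ⟨fG, haG⟩ := L0 hK h1 a
  obtain ⟨fF, hbF⟩ := L0 hK h1 b
  have hcF : {x | x ∈ Set.range ⇑fF ∧ M.Adj c x}.Finite := (hforall fF hbF).1
  have haF : {x | x ∈ Set.range ⇑fF ∧ M.Adj a x}.Finite := L1 (q2_symm hab) fF hbF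
  have hYinf : ((Set.range ⇑fF) \ (({a, b, c} : Set V) ∪
      ({x | x ∈ Set.range ⇑fF ∧ M.Adj a x} ∪ {x | x ∈ Set.range ⇑fF ∧ M.Adj c x}))).Infinite :=
    (range_infinite fF).diff ((Set.toFinite _).union (haF.union hcF))
  obtain ⟨yl, hylnd, hyllen, hylmem⟩ := pick hYinf k
  have hyprop : ∀ y ∈ yl, y ∈ Set.range ⇑fF ∧ y ≠ a ∧ y ≠ b ∧ y ≠ c ∧
      ¬ M.Adj a y ∧ ¬ M.Adj c y := by
    intro y hy
    have h := hylmem y hy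
    simp only [Set.mem_diff, Set.mem_union, Set.mem_insert_iff, Set.mem_singleton_iff,
      Set.mem_setOf_eq, not_or] at h
    exact ⟨h.1, h.2.1.1, h.2.1.2.1, h.2.1.2.2, fun hh => h.2.2.1 ⟨h.1, hh⟩,
      fun hh => h.2.2.2 ⟨h.1, hh⟩⟩
  have hB3fin : (⋃ y ∈ {x | x ∈ yl}, {x | x ∈ Set.range ⇑fG ∧ M.Adj y x}).Finite := by
    refine Set.Finite.biUnion (List.finite_toSet yl) ?_
    intro y hy
    exact L2 hM (q2_symm hab) fF hbF (hyprop y hy).1 (hyprop y hy).2.2.1 fG haG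
  have hbG : {x | x ∈ Set.range ⇑fG ∧ M.Adj b x}.Finite := L1 hab fG haG
  have hC'inf : ((Set.range ⇑fG) \ (({a, b, c} : Set V) ∪ ({x | x ∈ yl} ∪
      ({x | x ∈ Set.range ⇑fG ∧ M.Adj b x} ∪
        (⋃ y ∈ {x | x ∈ yl}, {x | x ∈ Set.range ⇑fG ∧ M.Adj y x}))))).Infinite :=
    (range_infinite fG).diff ((Set.toFinite _).union ((List.finite_toSet yl).union
      (hbG.union hB3fin)))
  obtain ⟨c', hc'⟩ := hC'inf.nonempty
  have hc'G : c' ∈ Set.range ⇑fG := hc'.1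
  have hc'prop : c' ≠ a ∧ c' ≠ b ∧ c' ≠ c ∧ c' ∉ yl ∧ ¬ M.Adj b c' ∧
      ∀ y ∈ yl, ¬ M.Adj y c' := by
    have h := hc'
    simp only [Set.mem_diff, Set.mem_union, Set.mem_insert_iff, Set.mem_singleton_iff,
      Set.mem_setOf_eq, Set.mem_iUnion, not_or, not_exists] at h
    refine ⟨h.2.1.1, h.2.1.2.1, h.2.1.2.2, h.2.2.1, fun hh => h.2.2.2.1 ⟨h.1, hh⟩, ?_⟩
    intro y hy hadj
    exact h.2.2.2.2 y hy ⟨h.1, hadj⟩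
  obtain ⟨g4, hg4c, hg4fix⟩ := ext1 M c c' (a :: b :: yl)
    (by
      refine List.nodup_cons.mpr ⟨?_, List.nodup_cons.mpr ⟨?_,
        List.nodup_cons.mpr ⟨?_, hylnd⟩⟩⟩
      · intro h
        rcases List.mem_cons.mp h with h' | h'
        · exact hac.1.ne' h'
        · rcases List.mem_cons.mp h' with h'' | h''
          · exact hne h''.symm
          · exact (hyprop _ h'').2.2.2.1 rfl
      · intro h
        rcases List.mem_cons.mp h with h' | h'
        · exact hab.1.ne h'
        · exact (hyprop _ h').2.1 rfl
      · intro h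
        exact (hyprop _ h).2.2.1 rfl)
    (by
      refine List.nodup_cons.mpr ⟨?_, List.nodup_cons.mpr ⟨?_,
        List.nodup_cons.mpr ⟨?_, hylnd⟩⟩⟩
      · intro h
        rcases List.mem_cons.mp h with h' | h'
        · exact hc'prop.1 h'
        · rcases List.mem_cons.mp h' with h'' | h''
          · exact hc'prop.2.1 h''
          · exact hc'prop.2.2.2.1 h''
      · intro h
        rcases List.mem_cons.mp h with h' | h'
        · exact hab.1.ne h'
        · exact (hyprop _ h').2.1 rfl
      · intro h
        exact (hyprop _ h).2.2.1 rfl)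
    (by
      intro z hz
      rcases List.mem_cons.mp hz with h | hz'
      · rw [h]
        exact iff_of_true hac.1.symm (range_clique_s12 fG c' hc'G a haG hc'prop.1)
      · rcases List.mem_cons.mp hz' with h | hz''
        · rw [h]
          refine iff_of_false ?_ ?_
          · intro hh
            exact hnadj hh.symm
          · intro hh
            exact hc'prop.2.2.2.2.1 hh.symm
        · refine iff_of_false ?_ ?_
          · intro hh
            exact (hyprop _ hz'').2.2.2.2.2 hh
          · intro hh
            exact hc'prop.2.2.2.2.2 z hz'' hh.symm)
    (by
      have : (a :: b :: yl).length + 1 = k + 3 := by simp [hyllen]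
      rw [this]
      exact hM (k + 3) (by omega))
  have h := inck_map g4.symm ⟨fG, haG, hc'G⟩
  rw [iso_symm_eq g4 (hg4fix a List.mem_cons_self), iso_symm_eq g4 hg4c] at h
  exact hac.2 h
end

section
/- The graph H_{1,2} (two disjoint countably infinite complete graphs joined by a perfect matching) is ≥5-homogeneous: every isomorphism between finite induced subgraphs of size at least 5 extends to an automorphism. Moreover, H_{1,2} is 1-homogeneous but not 2-homogeneous. -/
open SimpleGraph

lemma h12_adj {x y : ℤ × Fin 2} :
    H12.Adj x y ↔ (x.2 = y.2 ∧ x.1 ≠ y.1) ∨ (x.1 = y.1 ∧ x.2 ≠ y.2) := Iff.rfl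

def mkAut (σ : Equiv.Perm ℤ) (ε : Fin 2) : H12 ≃g H12 where
  toEquiv := σ.prodCongr (Equiv.addRight ε)
  map_rel_iff' := by
    intro a b
    simp [h12_adj, Equiv.prodCongr, σ.injective.eq_iff]

lemma mkAut_apply (σ : Equiv.Perm ℤ) (ε : Fin 2) (x : ℤ × Fin 2) :
    mkAut σ ε x = (σ x.1, x.2 + ε) := rfl

lemma perm_extend {A B : Set ℤ} (hA : A.Finite) (hB : B.Finite) {g : ℤ → ℤ}
    (hbij : Set.BijOn g A B) : ∃ σ : Equiv.Perm ℤ, ∀ a ∈ A, σ a = g a := by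
  classical
  let e : ↥A ≃ ↥B := hbij.equiv g
  have he : ∀ (a : ℤ) (h : a ∈ A), (e ⟨a, h⟩ : ℤ) = g a := fun a h => rfl
  haveI : Infinite ↥(Aᶜ) := (hA.infinite_compl).to_subtype
  haveI : Infinite ↥(Bᶜ) := (hB.infinite_compl).to_subtype
  obtain ⟨e'⟩ : Nonempty (↥(Aᶜ) ≃ ↥(Bᶜ)) := nonempty_equiv_of_countable
  refine ⟨(Equiv.Set.sumCompl A).symm.trans ((e.sumCongr e').trans (Equiv.Set.sumCompl B)), ?_⟩
  intro a ha
  simp [Equiv.Set.sumCompl_symm_apply_of_mem ha, he a ha]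

lemma fin2_eq_of_ne : ∀ a b c : Fin 2, c ≠ a → c ≠ b → a = b := by decide

lemma fin2_shift : ∀ a b c d : Fin 2, ((a = b) ↔ (c = d)) → c = a + (d - b) := by decide

lemma prod_ne {u v : ℤ × Fin 2} (h2 : u.2 = v.2) (hne : u ≠ v) : u.1 ≠ v.1 := by
  intro h1; exact hne (Prod.ext h1 h2)

lemma fiber_char {s : Set (ℤ × Fin 2)} (hs : s.Finite) (h5 : 5 ≤ s.ncard)
    {u v : ℤ × Fin 2} (hu : u ∈ s) (hv : v ∈ s) (huv : u ≠ v) :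
    u.2 = v.2 ↔ (H12.Adj u v ∧
      ∃ w ∈ s, w ≠ u ∧ w ≠ v ∧ (H12.Adj w u ↔ H12.Adj w v)) := by
  constructor
  · intro h2
    have h1 : u.1 ≠ v.1 := prod_ne h2 huv
    refine ⟨Or.inl ⟨h2, h1⟩, ?_⟩
    by_cases hw : ∃ w ∈ s, w.2 = u.2 ∧ w ≠ u ∧ w ≠ v
    · obtain ⟨w, hwm, hw2, hwu, hwv⟩ := hw
      exact ⟨w, hwm, hwu, hwv,
        iff_of_true (Or.inl ⟨hw2, prod_ne hw2 hwu⟩)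
          (Or.inl ⟨hw2.trans h2, prod_ne (hw2.trans h2) hwv⟩)⟩
    · push_neg at hw
      set s' : Set (ℤ × Fin 2) := {w ∈ s | w.2 ≠ u.2} with hs'def
      have hs'fin : s'.Finite := hs.subset (fun w hw => hw.1)
      have hsub : s ⊆ s' ∪ {u, v} := by
        intro w hwm
        by_cases hw2 : w.2 = u.2
        · by_cases hwu : w = u
          · exact Or.inr (Or.inl hwu)
          · exact Or.inr (Or.inr (hw w hwm hw2 hwu))
        · exact Or.inl ⟨hwm, hw2⟩
      have hcard : 3 ≤ s'.ncard := by
        have hle : s.ncard ≤ (s' ∪ {u, v}).ncard :=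
          Set.ncard_le_ncard hsub (hs'fin.union (Set.toFinite _))
        have hle2 : (s' ∪ {u, v}).ncard ≤ s'.ncard + 2 := by
          have := Set.ncard_union_le s' {u, v}
          rwa [Set.ncard_pair huv] at this
        omega
      have hinj : Set.InjOn Prod.fst s' := by
        intro w hwm w' hwm' h
        exact Prod.ext h (fin2_eq_of_ne w.2 w'.2 u.2 (Ne.symm hwm.2) (Ne.symm hwm'.2))
      have hex : ∃ w ∈ s', w.1 ≠ u.1 ∧ w.1 ≠ v.1 := by
        by_contra hne
        push_neg at hne
        have himsub : Prod.fst '' s' ⊆ {u.1, v.1} := by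
          rintro a ⟨w, hwm, rfl⟩
          rcases Classical.em (w.1 = u.1) with h | h
          · exact Or.inl h
          · exact Or.inr (hne w hwm h)
        have h1' : (Prod.fst '' s').ncard = s'.ncard := Set.ncard_image_of_injOn hinj
        have h2' : (Prod.fst '' s').ncard ≤ 2 := by
          calc (Prod.fst '' s').ncard ≤ ({u.1, v.1} : Set ℤ).ncard :=
                Set.ncard_le_ncard himsub (Set.toFinite _)
            _ ≤ 2 := (Set.ncard_insert_le _ _).trans (by simp)
        omega
      obtain ⟨w, ⟨hwm, hw2⟩, hwu1, hwv1⟩ := hex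
      refine ⟨w, hwm, ?_, ?_, iff_of_false ?_ ?_⟩
      · intro h; exact hw2 (by rw [h])
      · intro h; exact hw2 (by rw [h, ← h2])
      · rintro (⟨h, _⟩ | ⟨h, _⟩); exacts [hw2 h, hwu1 h]
      · rintro (⟨h, _⟩ | ⟨h, _⟩); exacts [hw2 (h.trans h2.symm), hwv1 h]
  · rintro ⟨hadj, w, hwm, hwu, hwv, hiff⟩
    by_contra h2
    rcases hadj with ⟨h, _⟩ | ⟨h1, _⟩
    · exact h2 h
    have hw1 : w.1 ≠ u.1 := by
      intro hcol
      have hwu2 : w.2 ≠ u.2 := fun h => hwu (Prod.ext hcol h)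
      have hwv2 : w.2 ≠ v.2 := fun h => hwv (Prod.ext (hcol.trans h1) h)
      exact h2 (fin2_eq_of_ne u.2 v.2 w.2 hwu2 hwv2)
    have hwv1 : w.1 ≠ v.1 := fun h => hw1 (h.trans h1.symm)
    have hau : H12.Adj w u ↔ w.2 = u.2 := by
      constructor
      · rintro (⟨h, _⟩ | ⟨h, _⟩); exacts [h, absurd h hw1]
      · intro h; exact Or.inl ⟨h, hw1⟩
    have hav : H12.Adj w v ↔ w.2 = v.2 := by
      constructor
      · rintro (⟨h, _⟩ | ⟨h, _⟩); exacts [h, absurd h hwv1]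
      · intro h; exact Or.inl ⟨h, hwv1⟩
    rw [hau, hav] at hiff
    by_cases hcase : w.2 = u.2
    · exact h2 (hcase.symm.trans (hiff.mp hcase))
    · exact h2 (fin2_eq_of_ne u.2 v.2 w.2 hcase (fun h => hcase (hiff.mpr h)))


theorem geq5 : GeqHom H12 5 := by
  intro n hn s t hs ht hsn htn f
  classical
  have hs5 : 5 ≤ s.ncard := by omega
  have ht5 : 5 ≤ t.ncard := by omega
  have fadj : ∀ u v : ↥s, H12.Adj u.val v.val ↔ H12.Adj (f u).val (f v).val := by
    intro u v
    exact f.map_rel_iff.symm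
  have fne : ∀ {u v : ↥s}, u ≠ v → (f u).val ≠ (f v).val :=
    fun {u v} h hh => h (f.toEquiv.injective (Subtype.ext hh))
  have key : ∀ u v : ↥s, (u.val.2 = v.val.2 ↔ (f u).val.2 = (f v).val.2) := by
    intro u v
    by_cases huv : u = v
    · subst huv; simp
    · have hvne : u.val ≠ v.val := fun h => huv (Subtype.ext h)
      rw [fiber_char hs hs5 u.2 v.2 hvne,
        fiber_char ht ht5 (f u).2 (f v).2 (fne huv)]
      constructor
      · rintro ⟨hadj, w, hwm, hwu, hwv, hiff⟩
        refine ⟨(fadj u v).mp hadj, (f ⟨w, hwm⟩).val, (f ⟨w, hwm⟩).2, ?_, ?_, ?_⟩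
        · intro h
          exact hwu (congrArg Subtype.val (f.toEquiv.injective (Subtype.ext h)))
        · intro h
          exact hwv (congrArg Subtype.val (f.toEquiv.injective (Subtype.ext h)))
        · rw [← fadj ⟨w, hwm⟩ u, ← fadj ⟨w, hwm⟩ v]; exact hiff
      · rintro ⟨hadj, w, hwm, hwu, hwv, hiff⟩
        obtain ⟨w', hfw⟩ := f.toEquiv.surjective ⟨w, hwm⟩
        have hval : (f w').val = w := congrArg Subtype.val hfw
        refine ⟨(fadj u v).mpr hadj, w'.val, w'.2, ?_, ?_, ?_⟩
        · intro h
          exact hwu (by rw [← hval, congrArg f (Subtype.ext h)])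
        · intro h
          exact hwv (by rw [← hval, congrArg f (Subtype.ext h)])
        · rw [fadj w' u, fadj w' v, hval]; exact hiff
  have hne : s.Nonempty := Set.nonempty_of_ncard_ne_zero (by omega)
  obtain ⟨u₀, hu₀⟩ := hne
  set U₀ : ↥s := ⟨u₀, hu₀⟩ with hU₀
  set ε : Fin 2 := (f U₀).val.2 - U₀.val.2 with hε
  have hshift : ∀ u : ↥s, (f u).val.2 = u.val.2 + ε :=
    fun u => fin2_shift _ _ _ _ (key u U₀)
  have hcol : ∀ u v : ↥s, u.val.1 = v.val.1 ↔ (f u).val.1 = (f v).val.1 := by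
    intro u v
    constructor
    · intro h
      by_cases huv : u = v
      · subst huv; rfl
      · have h2 : u.val.2 ≠ v.val.2 := by
          intro hh
          exact huv (Subtype.ext (Prod.ext h hh))
        have hadj := (fadj u v).mp (Or.inr ⟨h, h2⟩)
        rcases hadj with ⟨ha, _⟩ | ⟨ha, _⟩
        · exact absurd ((key u v).mpr ha) h2
        · exact ha
    · intro h
      by_cases huv : u = v
      · subst huv; rfl
      · have h2 : (f u).val.2 ≠ (f v).val.2 := by
          intro hh
          exact fne huv (Prod.ext h hh)
        have hadj := (fadj u v).mpr (Or.inr ⟨h, h2⟩)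
        rcases hadj with ⟨ha, _⟩ | ⟨ha, _⟩
        · exact absurd ((key u v).mp ha) h2
        · exact ha
  let cf : ℤ → ℤ := fun a => if h : ∃ u : ↥s, u.val.1 = a then (f h.choose).val.1 else a
  have hcf : ∀ u : ↥s, cf u.val.1 = (f u).val.1 := by
    intro u
    have hex : ∃ v : ↥s, v.val.1 = u.val.1 := ⟨u, rfl⟩
    simp only [cf, dif_pos hex]
    exact (hcol hex.choose u).mp hex.choose_spec
  have hbij : Set.BijOn cf (Prod.fst '' s) (Prod.fst '' t) := by
    refine ⟨?_, ?_, ?_⟩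
    · rintro a ⟨u, hum, rfl⟩
      rw [hcf ⟨u, hum⟩]
      exact ⟨(f ⟨u, hum⟩).val, (f ⟨u, hum⟩).2, rfl⟩
    · rintro a ⟨u, hum, rfl⟩ b ⟨v, hvm, rfl⟩ h
      rw [hcf ⟨u, hum⟩, hcf ⟨v, hvm⟩] at h
      exact (hcol ⟨u, hum⟩ ⟨v, hvm⟩).mpr h
    · rintro b ⟨w, hwm, rfl⟩
      obtain ⟨u, hu⟩ := f.toEquiv.surjective ⟨w, hwm⟩
      refine ⟨u.val.1, ⟨u.val, u.2, rfl⟩, ?_⟩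
      rw [hcf u]
      exact congrArg (fun x => Subtype.val x |>.1) hu
  obtain ⟨σ, hσ⟩ := perm_extend (hs.image _) (ht.image _) hbij
  refine ⟨mkAut σ ε, ?_⟩
  intro u
  rw [mkAut_apply]
  have h1 : σ u.val.1 = (f u).val.1 := (hσ _ ⟨u.val, u.2, rfl⟩).trans (hcf u)
  exact Prod.ext h1 (hshift u).symm

theorem hom1 : IsNHom H12 1 := by
  intro s t hs ht hsn htn f
  obtain ⟨a, rfl⟩ := Set.ncard_eq_one.mp hsn
  obtain ⟨b, rfl⟩ := Set.ncard_eq_one.mp htn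
  refine ⟨mkAut (Equiv.addRight (b.1 - a.1)) (b.2 - a.2), ?_⟩
  intro x
  have hx : x.val = a := x.2
  have hfb : (f x).val = b := (f x).2
  rw [hx, hfb, mkAut_apply]
  refine Prod.ext ?_ ?_
  · show a.1 + (b.1 - a.1) = b.1; ring
  · show a.2 + (b.2 - a.2) = b.2; abel
theorem nothom2 : ¬ IsNHom H12 2 := by
  intro h
  classical
  set s : Set (ℤ × Fin 2) := {((0:ℤ), (0:Fin 2)), ((1:ℤ), (0:Fin 2))} with hsdef
  set t : Set (ℤ × Fin 2) := {((0:ℤ), (0:Fin 2)), ((0:ℤ), (1:Fin 2))} with htdef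
  have hsn : s.ncard = 2 := Set.ncard_pair (by decide)
  have htn : t.ncard = 2 := Set.ncard_pair (by decide)
  have hmem1 : ((0:ℤ), (0:Fin 2)) ∈ s := Or.inl rfl
  have hmem2 : ((1:ℤ), (0:Fin 2)) ∈ s := Or.inr rfl
  have tmem1 : ((0:ℤ), (0:Fin 2)) ∈ t := Or.inl rfl
  have tmem2 : ((0:ℤ), (1:Fin 2)) ∈ t := Or.inr rfl
  -- the isomorphism
  let e : ↥s ≃ ↥t :=
  { toFun := fun x => if x.val.1 = 0 then ⟨_, tmem1⟩ else ⟨_, tmem2⟩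
    invFun := fun y => if y.val.2 = 0 then ⟨_, hmem1⟩ else ⟨_, hmem2⟩
    left_inv := by
      rintro ⟨x, hx | hx⟩ <;> subst hx <;> simp
    right_inv := by
      rintro ⟨y, hy | hy⟩ <;> subst hy <;> simp }
  have he1 : (e ⟨_, hmem1⟩).val = ((0:ℤ), (0:Fin 2)) := by simp [e]
  have he2 : (e ⟨_, hmem2⟩).val = ((0:ℤ), (1:Fin 2)) := by simp [e]
  have hiso : ∀ a b : ↥s, (H12.induce t).Adj (e a) (e b) ↔ (H12.induce s).Adj a b := by
    rintro ⟨x, hx | hx⟩ ⟨y, hy | hy⟩ <;> subst hx <;> subst hy <;>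
      simp [e, comap_adj, h12_adj] <;> decide
  obtain ⟨g, hg⟩ := h s t (Set.toFinite _) (Set.toFinite _) hsn htn ⟨e, hiso _ _⟩
  have hg1 : g ((0:ℤ), (0:Fin 2)) = ((0:ℤ), (0:Fin 2)) := by
    exact (hg ⟨_, hmem1⟩).trans he1
  have hg2 : g ((1:ℤ), (0:Fin 2)) = ((0:ℤ), (1:Fin 2)) := by
    exact (hg ⟨_, hmem2⟩).trans he2
  -- the common neighbour (2,0)
  set c : ℤ × Fin 2 := ((2:ℤ), (0:Fin 2)) with hcdef
  have hc1 : H12.Adj (g c) ((0:ℤ), (0:Fin 2)) := by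
    rw [← hg1]; exact g.map_rel_iff.mpr (Or.inl ⟨rfl, by decide⟩)
  have hc2 : H12.Adj (g c) ((0:ℤ), (1:Fin 2)) := by
    rw [← hg2]; exact g.map_rel_iff.mpr (Or.inl ⟨rfl, by decide⟩)
  rcases hc1 with ⟨h1, h2⟩ | ⟨h1, h2⟩ <;> rcases hc2 with ⟨h3, h4⟩ | ⟨h3, h4⟩
  · exact absurd (h1.symm.trans h3) (by decide)
  · exact h2 h3
  · exact h4 h1
  · exact absurd (fin2_eq_of_ne _ _ _ h2 h4) (by decide)


theorem stmt17 :
    GeqHom H12 5 ∧ IsNHom H12 1 ∧ ¬ IsNHom H12 2 :=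
  ⟨geq5, hom1, nothom2⟩
end
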